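/- arXiv:1012.0729 — 6 statements merged into one kernel-verified Lean document; each statement's English description precedes it below -/
import Mathlib

section
/- Let A = (A^{(1)},…,A^{(R)}) and B = (B^{(1)},…,B^{(R)}) be families of mutually independent random vectors, where A^{(i)} and B^{(i)} take values in [−1,1]^{k_i}, and suppose that for every i ∈ [R] the ensembles A^{(i)} and B^{(i)} have matching moments up to degree 3. Let l = (l^{(1)},…,l^{(R)}) with l^{(i)} ∈ ℝ^{k_i}, and define the linear function l(x) = Σ_{i∈[R]} ⟨l^{(i)}, x^{(i)}⟩. Then for every K-bounded function Ψ : ℝ → ℝ and every θ ∈ ℝ, |E[Ψ(l(A) − θ)] − E[Ψ(l(B) − θ)]| ≤ K · Σ_{i∈[R]} ‖l^{(i)}‖₁⁴. -/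
open MeasureTheory intervalIntegral
open scoped ENNReal

noncomputable section

lemma deriv_growth : ∀ (n : ℕ) (g : ℝ → ℝ) (M : ℝ),
    (∀ m, m < n → Differentiable ℝ (iteratedDeriv m g)) →
    (∀ m, m < n → iteratedDeriv m g 0 = 0) →
    (∀ t, |iteratedDeriv n g t| ≤ M) →
    ∀ t, |g t| ≤ M * |t| ^ n / (n.factorial : ℝ) := by
  intro n
  induction n with
  | zero => intro g M _ _ hb t; simpa using hb t
  | succ n ih =>
    intro g M hdiff h0 hb t
    have hM : 0 ≤ M := le_trans (abs_nonneg _) (hb 0)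
    have ihg : ∀ s, |deriv g s| ≤ M * |s| ^ n / n.factorial := by
      apply ih (deriv g) M
      · intro m hm; rw [← iteratedDeriv_succ']; exact hdiff (m+1) (by omega)
      · intro m hm; rw [← iteratedDeriv_succ']; exact h0 (m+1) (by omega)
      · intro u; rw [← iteratedDeriv_succ']; exact hb u
    have hgdiff : Differentiable ℝ g := by
      have := hdiff 0 (by omega); simpa [iteratedDeriv_zero] using this
    have hg0 : g 0 = 0 := by
      have := h0 0 (by omega); simpa [iteratedDeriv_zero] using this
    have hc : Continuous fun u : ℝ => M * |u| ^ n / n.factorial := by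
      fun_prop
    have hbnn : ∀ u : ℝ, 0 ≤ M * |u| ^ n / n.factorial := fun u =>
      div_nonneg (mul_nonneg hM (by positivity)) (by positivity)
    have hint : IntervalIntegrable (deriv g) volume 0 t := by
      apply (hc.intervalIntegrable 0 t).mono_fun
        ((measurable_deriv g).aestronglyMeasurable)
      filter_upwards with u
      simp only [Real.norm_eq_abs]
      rw [abs_of_nonneg (hbnn u)]
      exact ihg u
    have hft : ∫ u in (0:ℝ)..t, deriv g u = g t - g 0 :=
      integral_deriv_eq_sub (fun x _ => (hgdiff x)) hint
    have key : |∫ u in (0:ℝ)..t, deriv g u| ≤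
        |∫ u in (0:ℝ)..t, M * |u| ^ n / n.factorial| := by
      rw [← Real.norm_eq_abs (∫ u in (0:ℝ)..t, deriv g u)]
      apply intervalIntegral.norm_integral_le_abs_of_norm_le ?_ (hc.intervalIntegrable 0 t)
      filter_upwards with u
      simpa [Real.norm_eq_abs] using ihg u
    have hval : |∫ u in (0:ℝ)..t, M * |u| ^ n / n.factorial|
        = M * |t| ^ (n+1) / ((n+1) * n.factorial) := by
      rcases le_or_gt 0 t with h | h
      · rw [intervalIntegral.integral_congr (g := fun u => (M / n.factorial) * u ^ n)
          (fun u hu => by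
            rw [Set.uIcc_of_le h] at hu
            rw [abs_of_nonneg hu.1]; ring)]
        rw [intervalIntegral.integral_const_mul, integral_pow]
        rw [zero_pow (Nat.succ_ne_zero n), sub_zero, abs_of_nonneg h]
        rw [abs_of_nonneg (mul_nonneg (div_nonneg hM (by positivity))
          (div_nonneg (pow_nonneg h _) (by positivity)))]
        field_simp
      · rw [intervalIntegral.integral_congr
          (g := fun u => ((-1:ℝ)^n * M / n.factorial) * u ^ n)
          (fun u hu => by
            rw [Set.uIcc_of_ge h.le] at hu
            rw [abs_of_nonpos hu.2, neg_pow]; ring)]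
        rw [intervalIntegral.integral_const_mul, integral_pow]
        rw [zero_pow (Nat.succ_ne_zero n), sub_zero]
        rw [abs_mul, abs_div, abs_mul, abs_pow, abs_neg, abs_one, one_pow, one_mul,
          abs_of_nonneg hM, Nat.abs_cast, abs_div, abs_pow,
          abs_of_nonneg (by positivity : (0:ℝ) ≤ (n:ℝ) + 1)]
        field_simp
    calc |g t| = |∫ u in (0:ℝ)..t, deriv g u| := by rw [hft, hg0, sub_zero]
      _ ≤ _ := key
      _ = M * |t| ^ (n+1) / ((n+1) * n.factorial) := hval
      _ = M * |t| ^ (n+1) / (n+1).factorial := by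
          rw [Nat.factorial_succ]; push_cast; ring_nf

lemma deriv_shift_sub (c : ℝ) (F P : ℝ → ℝ) (hF : Differentiable ℝ F) {P' : ℝ → ℝ}
    (hP : ∀ s, HasDerivAt P (P' s) s) :
    deriv (fun s => F (c + s) - P s) = fun s => deriv F (c + s) - P' s := by
  funext s
  have h1 : HasDerivAt (fun s : ℝ => F (c + s)) (deriv F (c + s)) s := by
    have := (hF (c + s)).hasDerivAt.comp s ((hasDerivAt_id s).const_add c)
    rw [mul_one] at this
    exact this
  exact (h1.sub (hP s)).deriv

lemma taylor4 (Ψ : ℝ → ℝ) (K : ℝ)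
    (hdiff : ∀ m : ℕ, m < 4 → Differentiable ℝ (iteratedDeriv m Ψ))
    (hK : ∀ t : ℝ, |iteratedDeriv 4 Ψ t| ≤ K) (c : ℝ) :
    ∀ s : ℝ, |Ψ (c + s) - (Ψ c + deriv Ψ c * s + iteratedDeriv 2 Ψ c / 2 * s ^ 2
      + iteratedDeriv 3 Ψ c / 6 * s ^ 3)| ≤ K / 24 * s ^ 4 := by
  intro s
  set a1 := deriv Ψ c with ha1
  set a2 := iteratedDeriv 2 Ψ c with ha2
  set a3 := iteratedDeriv 3 Ψ c with ha3
  set g : ℝ → ℝ := fun s => Ψ (c + s) - (Ψ c + a1 * s + a2 / 2 * s ^ 2 + a3 / 6 * s ^ 3)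
    with hg
  have hΨ0 : Differentiable ℝ Ψ := by simpa [iteratedDeriv_zero] using hdiff 0 (by omega)
  have hΨ1 : Differentiable ℝ (deriv Ψ) := by simpa [iteratedDeriv_one] using hdiff 1 (by omega)
  have hΨ2 : Differentiable ℝ (iteratedDeriv 2 Ψ) := hdiff 2 (by omega)
  have hΨ3 : Differentiable ℝ (iteratedDeriv 3 Ψ) := hdiff 3 (by omega)
  have hd21 : deriv (deriv Ψ) = iteratedDeriv 2 Ψ := by
    rw [iteratedDeriv_succ, iteratedDeriv_one]
  have hd32 : deriv (iteratedDeriv 2 Ψ) = iteratedDeriv 3 Ψ := iteratedDeriv_succ.symm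
  have hd43 : deriv (iteratedDeriv 3 Ψ) = iteratedDeriv 4 Ψ := iteratedDeriv_succ.symm
  -- polynomial derivatives
  have hP0 : ∀ t : ℝ, HasDerivAt (fun t : ℝ => Ψ c + a1 * t + a2 / 2 * t ^ 2 + a3 / 6 * t ^ 3)
      (a1 + a2 * t + a3 / 2 * t ^ 2) t := by
    intro t
    have h1 := ((hasDerivAt_id t).const_mul a1).const_add (Ψ c)
    have h2 := (hasDerivAt_pow 2 t).const_mul (a2 / 2)
    have h3 := (hasDerivAt_pow 3 t).const_mul (a3 / 6)
    refine ((h1.add h2).add h3).congr_deriv ?_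
    push_cast
    ring
  have hP1 : ∀ t : ℝ, HasDerivAt (fun t : ℝ => a1 + a2 * t + a3 / 2 * t ^ 2)
      (a2 + a3 * t) t := by
    intro t
    have h1 := ((hasDerivAt_id t).const_mul a2).const_add a1
    have h2 := (hasDerivAt_pow 2 t).const_mul (a3 / 2)
    refine (h1.add h2).congr_deriv ?_
    push_cast
    ring
  have hP2 : ∀ t : ℝ, HasDerivAt (fun t : ℝ => a2 + a3 * t) a3 t := by
    intro t
    simpa using ((hasDerivAt_id t).const_mul a3).const_add a2
  have hP3 : ∀ t : ℝ, HasDerivAt (fun _ : ℝ => a3) 0 t := fun t => hasDerivAt_const t a3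
  -- iterated derivatives of g
  have i1 : iteratedDeriv 1 g = fun t => deriv Ψ (c + t) - (a1 + a2 * t + a3 / 2 * t ^ 2) := by
    rw [iteratedDeriv_one, hg]
    exact deriv_shift_sub c Ψ _ hΨ0 hP0
  have i2 : iteratedDeriv 2 g = fun t => iteratedDeriv 2 Ψ (c + t) - (a2 + a3 * t) := by
    rw [iteratedDeriv_succ, i1, deriv_shift_sub c (deriv Ψ) _ hΨ1 hP1, hd21]
  have i3 : iteratedDeriv 3 g = fun t => iteratedDeriv 3 Ψ (c + t) - a3 := by
    rw [iteratedDeriv_succ, i2, deriv_shift_sub c (iteratedDeriv 2 Ψ) _ hΨ2 hP2, hd32]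
  have i4 : iteratedDeriv 4 g = fun t => iteratedDeriv 4 Ψ (c + t) := by
    rw [iteratedDeriv_succ, i3, deriv_shift_sub c (iteratedDeriv 3 Ψ) _ hΨ3 hP3, hd43]
    simp
  have hcomp : ∀ (F : ℝ → ℝ), Differentiable ℝ F → Differentiable ℝ (fun t : ℝ => F (c + t)) :=
    fun F hF => hF.comp (differentiable_id.const_add c)
  have hgrow := deriv_growth 4 g K ?hd ?h0 ?hb s
  case hd =>
    intro m hm
    interval_cases m
    · rw [iteratedDeriv_zero]; exact
        ((hcomp Ψ hΨ0).sub (by fun_prop) : Differentiable ℝ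
          (fun s => Ψ (c + s) - (Ψ c + a1 * s + a2 / 2 * s ^ 2 + a3 / 6 * s ^ 3)))
    · rw [i1]; exact (hcomp _ hΨ1).sub (by fun_prop)
    · rw [i2]; exact (hcomp _ hΨ2).sub (by fun_prop)
    · rw [i3]; exact (hcomp _ hΨ3).sub (by fun_prop)
  case h0 =>
    intro m hm
    interval_cases m
    · simp [iteratedDeriv_zero, hg]
    · simp [i1, ha1]
    · simp [i2, ha2]
    · simp [i3, ha3]
  case hb =>
    intro t
    rw [i4]
    exact hK (c + t)
  calc |g s| ≤ K * |s| ^ 4 / (Nat.factorial 4 : ℝ) := hgrow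
    _ = K / 24 * s ^ 4 := by
        rw [pow_abs, abs_of_nonneg (by positivity : (0:ℝ) ≤ s ^ 4)]
        norm_num [Nat.factorial]
        ring

lemma integrable_box {k : ℕ} (μ : Measure (Fin k → ℝ)) [IsProbabilityMeasure μ]
    (hbox : μ {v | ∀ j, |v j| ≤ 1} = 1) {f : (Fin k → ℝ) → ℝ} (hf : Continuous f) :
    Integrable f μ := by
  set B : Set (Fin k → ℝ) := Set.univ.pi (fun _ => Set.Icc (-1:ℝ) 1) with hB
  have hBeq : B = {v | ∀ j, |v j| ≤ 1} := by
    ext v; simp [hB, Set.mem_pi, abs_le, Pi.le_def, forall_and]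
  have hcomp : IsCompact B := isCompact_univ_pi (fun _ => isCompact_Icc)
  obtain ⟨C, hC⟩ := hcomp.exists_bound_of_continuousOn hf.continuousOn
  have hclosed : MeasurableSet B :=
    (isClosed_set_pi fun _ _ => isClosed_Icc).measurableSet
  have hae : ∀ᵐ v ∂μ, v ∈ B := by
    rw [ae_iff]
    have h0 : μ Bᶜ = 0 := by
      rw [measure_compl hclosed (measure_ne_top μ B), hBeq, hbox, measure_univ, tsub_self]
    exact h0
  apply Integrable.mono' (integrable_const C) hf.aestronglyMeasurable
  filter_upwards [hae] with v hv
  exact hC v hv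

lemma ae_box {k : ℕ} (μ : Measure (Fin k → ℝ)) [IsProbabilityMeasure μ]
    (hbox : μ {v | ∀ j, |v j| ≤ 1} = 1) : ∀ᵐ v ∂μ, ∀ j, |v j| ≤ 1 := by
  rw [ae_iff]
  have hclosed : MeasurableSet {v : Fin k → ℝ | ∀ j, |v j| ≤ 1} := by
    have : {v : Fin k → ℝ | ∀ j, |v j| ≤ 1} = Set.univ.pi (fun _ => Set.Icc (-1:ℝ) 1) := by
      ext v; simp [Set.mem_pi, abs_le, Pi.le_def, forall_and]
    rw [this]
    exact (isClosed_set_pi fun _ _ => isClosed_Icc).measurableSet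
  have h0 : μ {v : Fin k → ℝ | ∀ j, |v j| ≤ 1}ᶜ = 0 := by
    rw [measure_compl hclosed (measure_ne_top μ _), hbox, measure_univ, tsub_self]
  simpa [Set.compl_setOf] using h0

lemma mom_pow {k : ℕ} (μ ν : Measure (Fin k → ℝ))
    [IsProbabilityMeasure μ] [IsProbabilityMeasure ν]
    (hμ : μ {v | ∀ j, |v j| ≤ 1} = 1) (hν : ν {v | ∀ j, |v j| ≤ 1} = 1)
    (hmom : ∀ S : Multiset (Fin k), Multiset.card S ≤ 3 →
      ∫ v, (S.map v).prod ∂μ = ∫ v, (S.map v).prod ∂ν)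
    (l : Fin k → ℝ) (m : ℕ) (hm : m ≤ 3) :
    ∫ v, (∑ j, l j * v j) ^ m ∂μ = ∫ v, (∑ j, l j * v j) ^ m ∂ν := by
  have hterm : ∀ (p : Fin m → Fin k), Continuous fun v : Fin k → ℝ =>
      ∏ i : Fin m, (l (p i) * v (p i)) := by
    intro p
    exact continuous_finset_prod _ fun i _ => by fun_prop
  have key : ∀ (ρ : Measure (Fin k → ℝ)) [IsProbabilityMeasure ρ],
      ρ {v | ∀ j, |v j| ≤ 1} = 1 →
      ∫ v, (∑ j, l j * v j) ^ m ∂ρ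
        = ∑ p : Fin m → Fin k, (∏ i : Fin m, l (p i)) *
            ∫ v, ((Multiset.map p Finset.univ.val).map v).prod ∂ρ := by
    intro ρ _ hρ
    simp only [Fintype.sum_pow]
    rw [integral_finset_sum _ fun p _ => integrable_box ρ hρ (hterm p)]
    congr 1
    funext p
    rw [← MeasureTheory.integral_const_mul]
    congr 1
    funext v
    rw [Finset.prod_mul_distrib]
    congr 1
    rw [Multiset.map_map, ← Finset.prod_eq_multiset_prod]
    rfl
  rw [key μ hμ, key ν hν]
  congr 1
  funext p
  congr 1
  apply hmom
  simpa using hm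

lemma swap_one {k : ℕ} (K : ℝ) (μ ν : Measure (Fin k → ℝ))
    [IsProbabilityMeasure μ] [IsProbabilityMeasure ν]
    (hμ : μ {v | ∀ j, |v j| ≤ 1} = 1) (hν : ν {v | ∀ j, |v j| ≤ 1} = 1)
    (hmom : ∀ S : Multiset (Fin k), Multiset.card S ≤ 3 →
      ∫ v, (S.map v).prod ∂μ = ∫ v, (S.map v).prod ∂ν)
    (l : Fin k → ℝ) (Ψ : ℝ → ℝ)
    (hdiff : ∀ m : ℕ, m < 4 → Differentiable ℝ (iteratedDeriv m Ψ))
    (hK : ∀ t : ℝ, |iteratedDeriv 4 Ψ t| ≤ K) (c : ℝ) :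
    |(∫ v, Ψ (c + ∑ j, l j * v j) ∂μ) - ∫ v, Ψ (c + ∑ j, l j * v j) ∂ν|
      ≤ K / 12 * (∑ j, |l j|) ^ 4 := by
  have hK0 : 0 ≤ K := le_trans (abs_nonneg _) (hK 0)
  have hΨc : Continuous Ψ := by
    have := hdiff 0 (by omega)
    simpa [iteratedDeriv_zero] using this.continuous
  set L := ∑ j, |l j| with hL
  set T : ℝ → ℝ := fun s => Ψ c + deriv Ψ c * s + iteratedDeriv 2 Ψ c / 2 * s ^ 2
      + iteratedDeriv 3 Ψ c / 6 * s ^ 3 with hT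
  set sv : (Fin k → ℝ) → ℝ := fun v => ∑ j, l j * v j with hsv
  have hsvc : Continuous sv := by fun_prop
  have hTc : Continuous fun v => T (sv v) := by fun_prop
  have hfc : Continuous fun v => Ψ (c + sv v) := by fun_prop
  set coef : ℕ → ℝ := fun m =>
    if m = 0 then Ψ c else if m = 1 then deriv Ψ c
    else if m = 2 then iteratedDeriv 2 Ψ c / 2 else iteratedDeriv 3 Ψ c / 6 with hcoef
  have repr : ∀ s : ℝ, T s = ∑ m ∈ Finset.range 4, coef m * s ^ m := by
    intro s
    simp [hT, hcoef, Finset.sum_range_succ]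
  have hTint : ∀ (ρ : Measure (Fin k → ℝ)) [IsProbabilityMeasure ρ],
      ρ {v | ∀ j, |v j| ≤ 1} = 1 →
      ∫ v, T (sv v) ∂ρ = ∑ m ∈ Finset.range 4, coef m * ∫ v, (sv v) ^ m ∂ρ := by
    intro ρ _ hρ
    simp only [repr]
    rw [integral_finset_sum _ (fun m _ => integrable_box ρ hρ (by fun_prop))]
    exact Finset.sum_congr rfl fun m _ => MeasureTheory.integral_const_mul _ _
  have hTeq : ∫ v, T (sv v) ∂μ = ∫ v, T (sv v) ∂ν := by
    rw [hTint μ hμ, hTint ν hν]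
    refine Finset.sum_congr rfl fun m hm => ?_
    rw [mom_pow μ ν hμ hν hmom l m (by have := Finset.mem_range.mp hm; omega)]
  -- remainder bound
  have hrem : ∀ (ρ : Measure (Fin k → ℝ)) [IsProbabilityMeasure ρ],
      ρ {v | ∀ j, |v j| ≤ 1} = 1 →
      |∫ v, (Ψ (c + sv v) - T (sv v)) ∂ρ| ≤ K / 24 * L ^ 4 := by
    intro ρ _ hρ
    rw [← Real.norm_eq_abs]
    have := norm_integral_le_of_norm_le_const (μ := ρ)
      (f := fun v => Ψ (c + sv v) - T (sv v)) (C := K / 24 * L ^ 4) ?_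
    · simpa [measure_univ] using this
    · filter_upwards [ae_box ρ hρ] with v hv
      rw [Real.norm_eq_abs]
      have h1 : |sv v| ≤ L := by
        calc |sv v| ≤ ∑ j, |l j * v j| := Finset.abs_sum_le_sum_abs _ _
          _ ≤ ∑ j, |l j| := Finset.sum_le_sum fun j _ => by
              rw [abs_mul]
              calc |l j| * |v j| ≤ |l j| * 1 :=
                    mul_le_mul_of_nonneg_left (hv j) (abs_nonneg _)
                _ = |l j| := mul_one _
      have h2 : (sv v) ^ 4 ≤ L ^ 4 := by
        calc (sv v) ^ 4 = |sv v| ^ 4 := by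
              rw [pow_abs, abs_of_nonneg (by positivity)]
          _ ≤ L ^ 4 := pow_le_pow_left₀ (abs_nonneg _) h1 4
      calc |Ψ (c + sv v) - T (sv v)| ≤ K / 24 * (sv v) ^ 4 :=
            taylor4 Ψ K hdiff hK c (sv v)
        _ ≤ K / 24 * L ^ 4 := mul_le_mul_of_nonneg_left h2 (by positivity)
  have hint : ∀ (ρ : Measure (Fin k → ℝ)) [IsProbabilityMeasure ρ],
      ρ {v | ∀ j, |v j| ≤ 1} = 1 →
      ∫ v, Ψ (c + sv v) ∂ρ - ∫ v, T (sv v) ∂ρ = ∫ v, (Ψ (c + sv v) - T (sv v)) ∂ρ := by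
    intro ρ _ hρ
    rw [integral_sub (integrable_box ρ hρ hfc) (integrable_box ρ hρ hTc)]
  calc |(∫ v, Ψ (c + sv v) ∂μ) - ∫ v, Ψ (c + sv v) ∂ν|
      = |(∫ v, (Ψ (c + sv v) - T (sv v)) ∂μ) - ∫ v, (Ψ (c + sv v) - T (sv v)) ∂ν| := by
        rw [← hint μ hμ, ← hint ν hν, hTeq]
        ring_nf
    _ ≤ |∫ v, (Ψ (c + sv v) - T (sv v)) ∂μ| + |∫ v, (Ψ (c + sv v) - T (sv v)) ∂ν| :=
        abs_sub _ _
    _ ≤ K / 24 * L ^ 4 + K / 24 * L ^ 4 := add_le_add (hrem μ hμ) (hrem ν hν)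
    _ = K / 12 * L ^ 4 := by ring

lemma integrable_box_pi {R : ℕ} {k : Fin R → ℕ}
    (m : ∀ i : Fin R, Measure (Fin (k i) → ℝ)) [∀ i, IsProbabilityMeasure (m i)]
    (hbox : ∀ i, m i {v | ∀ j, |v j| ≤ 1} = 1)
    {f : (∀ i : Fin R, Fin (k i) → ℝ) → ℝ} (hf : Continuous f) :
    Integrable f (Measure.pi m) := by
  set B : Set (∀ i : Fin R, Fin (k i) → ℝ) :=
    Set.univ.pi (fun i => Set.univ.pi (fun _ => Set.Icc (-1:ℝ) 1)) with hB
  have hin : ∀ i : Fin R, (Set.univ.pi (fun _ : Fin (k i) => Set.Icc (-1:ℝ) 1))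
      = {v : Fin (k i) → ℝ | ∀ j, |v j| ≤ 1} := by
    intro i; ext v; simp [Set.mem_pi, abs_le, Pi.le_def, forall_and]
  have hcomp : IsCompact B :=
    isCompact_univ_pi (fun i => isCompact_univ_pi (fun _ => isCompact_Icc))
  have hclosed : MeasurableSet B :=
    (isClosed_set_pi fun i _ =>
      isClosed_set_pi fun _ _ => isClosed_Icc).measurableSet
  obtain ⟨C, hC⟩ := hcomp.exists_bound_of_continuousOn hf.continuousOn
  have hmeas : Measure.pi m B = 1 := by
    rw [hB, Measure.pi_pi]
    exact Finset.prod_eq_one fun i _ => by rw [hin i]; exact hbox i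
  have hae : ∀ᵐ x ∂(Measure.pi m), x ∈ B := by
    rw [ae_iff]
    have h0 : Measure.pi m Bᶜ = 0 := by
      rw [measure_compl hclosed (measure_ne_top _ B), hmeas, measure_univ, tsub_self]
    exact h0
  apply Integrable.mono' (integrable_const C) hf.aestronglyMeasurable
  filter_upwards [hae] with x hx
  exact hC x hx

lemma pi_swap {R : ℕ} {k : Fin R → ℕ} (K : ℝ)
    (m₁ m₂ : ∀ i : Fin R, Measure (Fin (k i) → ℝ))
    [∀ i, IsProbabilityMeasure (m₁ i)] [∀ i, IsProbabilityMeasure (m₂ i)]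
    (hb₁ : ∀ i, m₁ i {v | ∀ j, |v j| ≤ 1} = 1) (hb₂ : ∀ i, m₂ i {v | ∀ j, |v j| ≤ 1} = 1)
    (i₀ : Fin R) (heq : ∀ j, j ≠ i₀ → m₁ j = m₂ j)
    (hmom : ∀ S : Multiset (Fin (k i₀)), Multiset.card S ≤ 3 →
      ∫ v, (S.map v).prod ∂(m₁ i₀) = ∫ v, (S.map v).prod ∂(m₂ i₀))
    (l : ∀ i : Fin R, Fin (k i) → ℝ) (Ψ : ℝ → ℝ)
    (hdiff : ∀ m : ℕ, m < 4 → Differentiable ℝ (iteratedDeriv m Ψ))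
    (hK : ∀ t : ℝ, |iteratedDeriv 4 Ψ t| ≤ K) (θ : ℝ) :
    |(∫ x, Ψ ((∑ i, ∑ j, l i j * x i j) - θ) ∂(Measure.pi m₁)) -
        ∫ x, Ψ ((∑ i, ∑ j, l i j * x i j) - θ) ∂(Measure.pi m₂)|
      ≤ K / 12 * (∑ j, |l i₀ j|) ^ 4 := by
  have hΨc : Continuous Ψ := by
    have := hdiff 0 (by omega)
    simpa [iteratedDeriv_zero] using this.continuous
  cases R with
  | zero => exact i₀.elim0
  | succ n =>
    set α : Fin (n+1) → Type := fun i => Fin (k i) → ℝ with hα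
    set f : (∀ i, α i) → ℝ := fun x => Ψ ((∑ i, ∑ j, l i j * x i j) - θ) with hf
    have hfc : Continuous f := by
      apply hΨc.comp
      apply Continuous.sub _ continuous_const
      apply continuous_finset_sum
      intro i _
      apply continuous_finset_sum
      intro j _
      exact continuous_const.mul ((continuous_apply j).comp (continuous_apply i))
    set e := MeasurableEquiv.piFinSuccAbove α i₀ with he
    have hesymm : ∀ (v : α i₀) (y : ∀ j : Fin n, α (i₀.succAbove j)),
        e.symm (v, y) = i₀.insertNth v y := by
      intro v y
      rw [he, MeasurableEquiv.piFinSuccAbove_symm_apply]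
      rfl
    have hsum : ∀ (v : α i₀) (y : ∀ j : Fin n, α (i₀.succAbove j)),
        f (e.symm (v, y)) =
          Ψ (((∑ jj, ∑ j, l (i₀.succAbove jj) j * y jj j) - θ) + ∑ j, l i₀ j * v j) := by
      intro v y
      rw [hesymm]
      simp only [hf]
      congr 1
      rw [Fin.sum_univ_succAbove (fun i => ∑ j, l i j * (i₀.insertNth v y) i j) i₀]
      simp only [Fin.insertNth_apply_same, Fin.insertNth_apply_succAbove]
      ring
    have key : ∀ (m : ∀ i : Fin (n+1), Measure (Fin (k i) → ℝ))
        [∀ i, IsProbabilityMeasure (m i)], (∀ i, m i {v | ∀ j, |v j| ≤ 1} = 1) →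
        ∫ x, f x ∂(Measure.pi m) =
          ∫ y, (∫ v, Ψ (((∑ jj, ∑ j, l (i₀.succAbove jj) j * y jj j) - θ)
              + ∑ j, l i₀ j * v j) ∂(m i₀))
            ∂(Measure.pi fun j => m (i₀.succAbove j)) := by
      intro m _ hbox
      have hmp := measurePreserving_piFinSuccAbove m i₀
      have hint : Integrable f (Measure.pi m) := integrable_box_pi m hbox hfc
      have hint2 : Integrable (fun z => f (e.symm z))
          ((m i₀).prod (Measure.pi fun j => m (i₀.succAbove j))) :=
        (MeasurePreserving.integrable_comp_emb (hmp.symm e) e.symm.measurableEmbedding).mpr hint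
      have h1 : ∫ x, f x ∂(Measure.pi m)
          = ∫ z, f (e.symm z) ∂((m i₀).prod (Measure.pi fun j => m (i₀.succAbove j))) :=
        ((hmp.symm e).integral_comp e.symm.measurableEmbedding f).symm
      rw [h1, integral_prod_symm _ hint2]
      congr 1
      funext y
      congr 1
      funext v
      exact hsum v y
    haveI : ∀ j : Fin n, IsProbabilityMeasure (m₁ (i₀.succAbove j)) := fun j => inferInstance
    have hrest : (fun j : Fin n => m₂ (i₀.succAbove j)) = fun j => m₁ (i₀.succAbove j) := by
      funext j
      exact (heq _ (Fin.succAbove_ne i₀ j)).symm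
    rw [key m₁ hb₁, key m₂ hb₂, hrest]
    set g₁ := fun y : ∀ j : Fin n, α (i₀.succAbove j) =>
      ∫ v, Ψ (((∑ jj, ∑ j, l (i₀.succAbove jj) j * y jj j) - θ) + ∑ j, l i₀ j * v j) ∂(m₁ i₀)
      with hg₁
    set g₂ := fun y : ∀ j : Fin n, α (i₀.succAbove j) =>
      ∫ v, Ψ (((∑ jj, ∑ j, l (i₀.succAbove jj) j * y jj j) - θ) + ∑ j, l i₀ j * v j) ∂(m₂ i₀)
      with hg₂
    have hint1 : Integrable g₁ (Measure.pi fun j => m₁ (i₀.succAbove j)) := by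
      have hmp := measurePreserving_piFinSuccAbove m₁ i₀
      have hint : Integrable f (Measure.pi m₁) := integrable_box_pi m₁ hb₁ hfc
      have hint2 : Integrable (fun z => f (e.symm z))
          ((m₁ i₀).prod (Measure.pi fun j => m₁ (i₀.succAbove j))) :=
        (MeasurePreserving.integrable_comp_emb (hmp.symm e) e.symm.measurableEmbedding).mpr hint
      have := hint2.integral_prod_right
      apply this.congr
      filter_upwards with y
      rw [hg₁]
      congr 1
      funext v
      exact hsum v y
    have hint2' : Integrable g₂ (Measure.pi fun j => m₁ (i₀.succAbove j)) := by
      have hmp := measurePreserving_piFinSuccAbove m₂ i₀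
      have hint : Integrable f (Measure.pi m₂) := integrable_box_pi m₂ hb₂ hfc
      have hint2 : Integrable (fun z => f (e.symm z))
          ((m₂ i₀).prod (Measure.pi fun j => m₂ (i₀.succAbove j))) :=
        (MeasurePreserving.integrable_comp_emb (hmp.symm e) e.symm.measurableEmbedding).mpr hint
      have := hint2.integral_prod_right
      rw [hrest] at this
      apply this.congr
      filter_upwards with y
      rw [hg₂]
      congr 1
      funext v
      exact hsum v y
    rw [← integral_sub hint1 hint2']
    rw [← Real.norm_eq_abs]
    have hb := norm_integral_le_of_norm_le_const
      (μ := Measure.pi fun j => m₁ (i₀.succAbove j))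
      (f := fun y => g₁ y - g₂ y) (C := K / 12 * (∑ j, |l i₀ j|) ^ 4) ?_
    · simpa [measure_univ] using hb
    · filter_upwards with y
      rw [Real.norm_eq_abs]
      exact swap_one K (m₁ i₀) (m₂ i₀) (hb₁ i₀) (hb₂ i₀) hmom (l i₀) Ψ hdiff hK _

/-- Invariance Principle, smooth version: if the independent ensembles
`A = (A⁽¹⁾,…,A⁽ᴿ⁾)` and `B = (B⁽¹⁾,…,B⁽ᴿ⁾)` are `[-1,1]`-valued and have matching moments
up to degree 3 coordinate-ensemble-wise, then for any `K`-bounded test function `Ψ`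
(fourth derivative exists and is bounded by `K`) and any linear form `l`, the expectations of
`Ψ(l(·) - θ)` under the two product distributions differ by at most `K · Σᵢ ‖l⁽ⁱ⁾‖₁⁴`. -/
theorem stmt_4 (R : ℕ) (k : Fin R → ℕ) (K : ℝ)
    (νA νB : ∀ i : Fin R, Measure (Fin (k i) → ℝ))
    [∀ i, IsProbabilityMeasure (νA i)] [∀ i, IsProbabilityMeasure (νB i)]
    (hAbd : ∀ i, νA i {v | ∀ j, |v j| ≤ 1} = 1)
    (hBbd : ∀ i, νB i {v | ∀ j, |v j| ≤ 1} = 1)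
    (hmom : ∀ i : Fin R, ∀ S : Multiset (Fin (k i)), Multiset.card S ≤ 3 →
      ∫ v, (S.map v).prod ∂(νA i) = ∫ v, (S.map v).prod ∂(νB i))
    (l : ∀ i : Fin R, Fin (k i) → ℝ)
    (Ψ : ℝ → ℝ)
    (hdiff : ∀ m : ℕ, m < 4 → Differentiable ℝ (iteratedDeriv m Ψ))
    (hK : ∀ t : ℝ, |iteratedDeriv 4 Ψ t| ≤ K)
    (θ : ℝ) :
    |(∫ x, Ψ ((∑ i, ∑ j, l i j * x i j) - θ) ∂(Measure.pi νA)) -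
        ∫ x, Ψ ((∑ i, ∑ j, l i j * x i j) - θ) ∂(Measure.pi νB)|
      ≤ K * ∑ i, (∑ j, |l i j|) ^ 4 := by
  classical
  have hK0 : 0 ≤ K := le_trans (abs_nonneg _) (hK 0)
  set hyb : ℕ → ∀ i : Fin R, Measure (Fin (k i) → ℝ) :=
    fun t i => if (i:ℕ) < t then νB i else νA i with hhyb
  haveI hprob : ∀ t i, IsProbabilityMeasure (hyb t i) := by
    intro t i
    rw [hhyb]
    dsimp only
    split_ifs <;> infer_instance
  have hbox : ∀ t i, hyb t i {v | ∀ j, |v j| ≤ 1} = 1 := by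
    intro t i
    rw [hhyb]
    dsimp only
    split_ifs
    · exact hBbd i
    · exact hAbd i
  set F : ℕ → ℝ := fun t =>
    ∫ x, Ψ ((∑ i, ∑ j, l i j * x i j) - θ) ∂(Measure.pi (hyb t)) with hF
  set G : ℕ → ℝ := fun t => if h : t < R then (∑ j, |l ⟨t, h⟩ j|) ^ 4 else 0 with hG
  have h0 : Measure.pi νA = Measure.pi (hyb 0) := by
    have he : hyb 0 = νA := by funext i; simp [hhyb]
    rw [he]
  have hR : Measure.pi νB = Measure.pi (hyb R) := by
    have he : hyb R = νB := by funext i; simp [hhyb, i.isLt]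
    rw [he]
  have hstep : ∀ t ∈ Finset.range R, |F (t+1) - F t| ≤ K / 12 * G t := by
    intro t ht
    have htR : t < R := Finset.mem_range.mp ht
    set i₀ : Fin R := ⟨t, htR⟩ with hi₀
    haveI := fun i => hprob (t+1) i
    haveI := fun i => hprob t i
    have heq : ∀ j, j ≠ i₀ → hyb (t+1) j = hyb t j := by
      intro j hj
      have hne : (j:ℕ) ≠ t := fun hcon => hj (Fin.ext hcon)
      by_cases hc : (j:ℕ) < t
      · simp [hhyb, hc, Nat.lt_succ_of_lt hc]
      · simp [hhyb, hc, show ¬((j:ℕ) < t+1) by omega]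
    have hmm : ∀ S : Multiset (Fin (k i₀)), Multiset.card S ≤ 3 →
        ∫ v, (S.map v).prod ∂(hyb (t+1) i₀) = ∫ v, (S.map v).prod ∂(hyb t i₀) := by
      intro S hS
      have h1 : hyb (t+1) i₀ = νB i₀ := by simp [hhyb, hi₀]
      have h2 : hyb t i₀ = νA i₀ := by simp [hhyb, hi₀]
      rw [h1, h2]
      exact (hmom i₀ S hS).symm
    have h := pi_swap K (hyb (t+1)) (hyb t) (hbox (t+1)) (hbox t) i₀ heq hmm l Ψ hdiff hK θ
    rw [hG]
    dsimp only
    rw [dif_pos htR]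
    exact h
  calc |(∫ x, Ψ ((∑ i, ∑ j, l i j * x i j) - θ) ∂(Measure.pi νA)) -
        ∫ x, Ψ ((∑ i, ∑ j, l i j * x i j) - θ) ∂(Measure.pi νB)|
      = |F 0 - F R| := by rw [h0, hR]
    _ = |∑ t ∈ Finset.range R, (F (t+1) - F t)| := by
        rw [abs_sub_comm, ← Finset.sum_range_sub F R]
    _ ≤ ∑ t ∈ Finset.range R, |F (t+1) - F t| := Finset.abs_sum_le_sum_abs _ _
    _ ≤ ∑ t ∈ Finset.range R, K / 12 * G t := Finset.sum_le_sum hstep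
    _ = K / 12 * ∑ t ∈ Finset.range R, G t := by rw [Finset.mul_sum]
    _ = K / 12 * ∑ i : Fin R, (∑ j, |l i j|) ^ 4 := by
        congr 1
        rw [← Fin.sum_univ_eq_sum_range G R]
        exact Finset.sum_congr rfl fun i _ => by
          rw [hG]; simp only [i.isLt, dif_pos, Fin.eta]
    _ ≤ K * ∑ i, (∑ j, |l i j|) ^ 4 := by
        apply mul_le_mul_of_nonneg_right _ (by positivity)
        linarith
end
end

section
/- There is an absolute constant C > 0 such that the following holds. Let A = (A^{(1)},…,A^{(R)}) and B = (B^{(1)},…,B^{(R)}) be families of mutually independent random vectors, where A^{(i)} and B^{(i)} take values in [−1,1]^{k_i}, and suppose that for every i ∈ [R] the ensembles A^{(i)} and B^{(i)} have matching moments up to degree 3. Let l = (l^{(1)},…,l^{(R)}) with l^{(i)} ∈ ℝ^{k_i} and l(x) = Σ_{i∈[R]} ⟨l^{(i)}, x^{(i)}⟩. For 0 < α < 1/2 define the spread function c(α) = max( sup_θ Pr[l(A) ∈ [θ−α, θ+α]], sup_θ Pr[l(B) ∈ [θ−α, θ+α]] ). Then for every θ ∈ ℝ and every 0 < α < 1/2,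 |E[sgn(l(A) − θ)] − E[sgn(l(B) − θ)]| ≤ (C/α⁴) · Σ_{i∈[R]} ‖l^{(i)}‖₁⁴ + 2·c(α). -/
open MeasureTheory
open scoped ENNReal

noncomputable section

/-- The sign function valued in `{0,1}`: `sgn01 t = 1` iff `t ≥ 0`. -/
def sgn01 (t : ℝ) : ℝ := if 0 ≤ t then 1 else 0

lemma hasDerivAt_maxpow (n : ℕ) (hn : 1 ≤ n) (u : ℝ) :
    HasDerivAt (fun v : ℝ => (max v 0) ^ (n + 1)) ((n + 1) * (max u 0) ^ n) u := by
  rcases lt_trichotomy u 0 with hu | hu | hu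
  · have h0 : max u 0 = 0 := max_eq_right hu.le
    have : (fun v : ℝ => (max v 0) ^ (n + 1)) =ᶠ[nhds u] fun _ => (0 : ℝ) := by
      filter_upwards [Iio_mem_nhds hu] with v hv
      rw [max_eq_right (le_of_lt hv), zero_pow (Nat.succ_ne_zero n)]
    rw [h0, zero_pow (by omega), mul_zero]
    exact (hasDerivAt_const u (0 : ℝ)).congr_of_eventuallyEq this
  · subst hu
    rw [max_self, zero_pow (by omega), mul_zero]
    rw [hasDerivAt_iff_tendsto_slope]
    have hb : ∀ v : ℝ, |slope (fun v : ℝ => (max v 0) ^ (n + 1)) 0 v| ≤ |v| ^ n := by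
      intro v
      simp only [slope_def_field, div_eq_mul_inv]
      rw [max_self, zero_pow (Nat.succ_ne_zero n), sub_zero, sub_zero]
      rcases le_or_gt v 0 with hv | hv
      · rw [max_eq_right hv]
        rw [zero_pow (Nat.succ_ne_zero n), zero_mul, abs_zero]
        positivity
      · rw [max_eq_left hv.le, abs_mul, abs_inv, pow_succ']
        rw [abs_mul, mul_assoc, mul_comm, mul_assoc, inv_mul_cancel₀ (by positivity), mul_one]
        exact le_of_eq (abs_pow v n)
    have h1 : Filter.Tendsto (fun v : ℝ => |v| ^ n) (nhdsWithin 0 {(0:ℝ)}ᶜ) (nhds 0) := by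
      have : Filter.Tendsto (fun v : ℝ => |v| ^ n) (nhds 0) (nhds 0) := by
        have := ((continuous_abs.pow n).tendsto (0:ℝ))
        exact (by simpa [zero_pow (by omega : n ≠ 0)] using this : Filter.Tendsto (abs ^ n) (nhds (0:ℝ)) (nhds 0))
      exact this.mono_left nhdsWithin_le_nhds
    refine squeeze_zero_norm (fun v => ?_) h1
    exact hb v
  · have h0 : max u 0 = u := max_eq_left hu.le
    have : (fun v : ℝ => (max v 0) ^ (n + 1)) =ᶠ[nhds u] fun v => v ^ (n + 1) := by
      filter_upwards [Ioi_mem_nhds hu] with v hv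
      rw [max_eq_left (le_of_lt hv)]
    rw [h0]
    have h := (hasDerivAt_pow (n+1) u).congr_of_eventuallyEq this
    refine h.congr_deriv ?_
    push_cast; ring

def rp (n : ℕ) (u : ℝ) : ℝ := (max u 0) ^ n

lemma hd_rp (n : ℕ) (hn : 1 ≤ n) (u : ℝ) :
    HasDerivAt (fun v => rp (n+1) v) (((n:ℝ)+1) * rp n u) u := by
  have := hasDerivAt_maxpow n hn u
  simpa [rp] using this

lemma hd_rps (n : ℕ) (hn : 1 ≤ n) (u : ℝ) :
    HasDerivAt (fun v => rp (n+1) (v - 1)) (((n:ℝ)+1) * rp n (u - 1)) u := by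
  have h1 : HasDerivAt (fun v : ℝ => v - 1) 1 u := (hasDerivAt_id u).sub_const 1
  have := (hasDerivAt_maxpow n hn (u-1)).comp u h1
  exact (by simpa using this : HasDerivAt ((fun v : ℝ => (max v 0) ^ (n + 1)) ∘ fun v : ℝ => v - 1) (((n:ℝ) + 1) * max (u - 1) 0 ^ n) u)

def S0fun (u : ℝ) : ℝ := (126:ℝ) * rp 5 u + (-420:ℝ) * rp 6 u + (540:ℝ) * rp 7 u + (-315:ℝ) * rp 8 u + (70:ℝ) * rp 9 u + (-126:ℝ) * rp 5 (u - 1) + (-420:ℝ) * rp 6 (u - 1) + (-540:ℝ) * rp 7 (u - 1) + (-315:ℝ) * rp 8 (u - 1) + (-70:ℝ) * rp 9 (u - 1)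

def S1fun (u : ℝ) : ℝ := (630:ℝ) * rp 4 u + (-2520:ℝ) * rp 5 u + (3780:ℝ) * rp 6 u + (-2520:ℝ) * rp 7 u + (630:ℝ) * rp 8 u + (-630:ℝ) * rp 4 (u - 1) + (-2520:ℝ) * rp 5 (u - 1) + (-3780:ℝ) * rp 6 (u - 1) + (-2520:ℝ) * rp 7 (u - 1) + (-630:ℝ) * rp 8 (u - 1)

def S2fun (u : ℝ) : ℝ := (2520:ℝ) * rp 3 u + (-12600:ℝ) * rp 4 u + (22680:ℝ) * rp 5 u + (-17640:ℝ) * rp 6 u + (5040:ℝ) * rp 7 u + (-2520:ℝ) * rp 3 (u - 1) + (-12600:ℝ) * rp 4 (u - 1) + (-22680:ℝ) * rp 5 (u - 1) + (-17640:ℝ) * rp 6 (u - 1) + (-5040:ℝ) * rp 7 (u - 1)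

def S3fun (u : ℝ) : ℝ := (7560:ℝ) * rp 2 u + (-50400:ℝ) * rp 3 u + (113400:ℝ) * rp 4 u + (-105840:ℝ) * rp 5 u + (35280:ℝ) * rp 6 u + (-7560:ℝ) * rp 2 (u - 1) + (-50400:ℝ) * rp 3 (u - 1) + (-113400:ℝ) * rp 4 (u - 1) + (-105840:ℝ) * rp 5 (u - 1) + (-35280:ℝ) * rp 6 (u - 1)

def S4fun (u : ℝ) : ℝ := (15120:ℝ) * rp 1 u + (-151200:ℝ) * rp 2 u + (453600:ℝ) * rp 3 u + (-529200:ℝ) * rp 4 u + (211680:ℝ) * rp 5 u + (-15120:ℝ) * rp 1 (u - 1) + (-151200:ℝ) * rp 2 (u - 1) + (-453600:ℝ) * rp 3 (u - 1) + (-529200:ℝ) * rp 4 (u - 1) + (-211680:ℝ) * rp 5 (u - 1)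

lemma hasDerivAt_S0 (u : ℝ) : HasDerivAt S0fun (S1fun u) u := by
  have h := (((((((((((hd_rp 4 (by norm_num) u).const_mul (126:ℝ)).add ((hd_rp 5 (by norm_num) u).const_mul (-420:ℝ))).add ((hd_rp 6 (by norm_num) u).const_mul (540:ℝ))).add ((hd_rp 7 (by norm_num) u).const_mul (-315:ℝ))).add ((hd_rp 8 (by norm_num) u).const_mul (70:ℝ))).add ((hd_rps 4 (by norm_num) u).const_mul (-126:ℝ))).add ((hd_rps 5 (by norm_num) u).const_mul (-420:ℝ))).add ((hd_rps 6 (by norm_num) u).const_mul (-540:ℝ))).add ((hd_rps 7 (by norm_num) u).const_mul (-315:ℝ))).add ((hd_rps 8 (by norm_num) u).const_mul (-70:ℝ)))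
  have hfun : S0fun = (fun v => (126:ℝ) * rp 5 v + (-420:ℝ) * rp 6 v + (540:ℝ) * rp 7 v + (-315:ℝ) * rp 8 v + (70:ℝ) * rp 9 v + (-126:ℝ) * rp 5 (v - 1) + (-420:ℝ) * rp 6 (v - 1) + (-540:ℝ) * rp 7 (v - 1) + (-315:ℝ) * rp 8 (v - 1) + (-70:ℝ) * rp 9 (v - 1)) := rfl
  rw [hfun]
  refine h.congr_deriv ?_
  simp only [S1fun]
  push_cast
  ring

lemma hasDerivAt_S1 (u : ℝ) : HasDerivAt S1fun (S2fun u) u := by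
  have h := (((((((((((hd_rp 3 (by norm_num) u).const_mul (630:ℝ)).add ((hd_rp 4 (by norm_num) u).const_mul (-2520:ℝ))).add ((hd_rp 5 (by norm_num) u).const_mul (3780:ℝ))).add ((hd_rp 6 (by norm_num) u).const_mul (-2520:ℝ))).add ((hd_rp 7 (by norm_num) u).const_mul (630:ℝ))).add ((hd_rps 3 (by norm_num) u).const_mul (-630:ℝ))).add ((hd_rps 4 (by norm_num) u).const_mul (-2520:ℝ))).add ((hd_rps 5 (by norm_num) u).const_mul (-3780:ℝ))).add ((hd_rps 6 (by norm_num) u).const_mul (-2520:ℝ))).add ((hd_rps 7 (by norm_num) u).const_mul (-630:ℝ)))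
  have hfun : S1fun = (fun v => (630:ℝ) * rp 4 v + (-2520:ℝ) * rp 5 v + (3780:ℝ) * rp 6 v + (-2520:ℝ) * rp 7 v + (630:ℝ) * rp 8 v + (-630:ℝ) * rp 4 (v - 1) + (-2520:ℝ) * rp 5 (v - 1) + (-3780:ℝ) * rp 6 (v - 1) + (-2520:ℝ) * rp 7 (v - 1) + (-630:ℝ) * rp 8 (v - 1)) := rfl
  rw [hfun]
  refine h.congr_deriv ?_
  simp only [S2fun]
  push_cast
  ring

lemma hasDerivAt_S2 (u : ℝ) : HasDerivAt S2fun (S3fun u) u := by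
  have h := (((((((((((hd_rp 2 (by norm_num) u).const_mul (2520:ℝ)).add ((hd_rp 3 (by norm_num) u).const_mul (-12600:ℝ))).add ((hd_rp 4 (by norm_num) u).const_mul (22680:ℝ))).add ((hd_rp 5 (by norm_num) u).const_mul (-17640:ℝ))).add ((hd_rp 6 (by norm_num) u).const_mul (5040:ℝ))).add ((hd_rps 2 (by norm_num) u).const_mul (-2520:ℝ))).add ((hd_rps 3 (by norm_num) u).const_mul (-12600:ℝ))).add ((hd_rps 4 (by norm_num) u).const_mul (-22680:ℝ))).add ((hd_rps 5 (by norm_num) u).const_mul (-17640:ℝ))).add ((hd_rps 6 (by norm_num) u).const_mul (-5040:ℝ)))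
  have hfun : S2fun = (fun v => (2520:ℝ) * rp 3 v + (-12600:ℝ) * rp 4 v + (22680:ℝ) * rp 5 v + (-17640:ℝ) * rp 6 v + (5040:ℝ) * rp 7 v + (-2520:ℝ) * rp 3 (v - 1) + (-12600:ℝ) * rp 4 (v - 1) + (-22680:ℝ) * rp 5 (v - 1) + (-17640:ℝ) * rp 6 (v - 1) + (-5040:ℝ) * rp 7 (v - 1)) := rfl
  rw [hfun]
  refine h.congr_deriv ?_
  simp only [S3fun]
  push_cast
  ring

lemma hasDerivAt_S3 (u : ℝ) : HasDerivAt S3fun (S4fun u) u := by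
  have h := (((((((((((hd_rp 1 (by norm_num) u).const_mul (7560:ℝ)).add ((hd_rp 2 (by norm_num) u).const_mul (-50400:ℝ))).add ((hd_rp 3 (by norm_num) u).const_mul (113400:ℝ))).add ((hd_rp 4 (by norm_num) u).const_mul (-105840:ℝ))).add ((hd_rp 5 (by norm_num) u).const_mul (35280:ℝ))).add ((hd_rps 1 (by norm_num) u).const_mul (-7560:ℝ))).add ((hd_rps 2 (by norm_num) u).const_mul (-50400:ℝ))).add ((hd_rps 3 (by norm_num) u).const_mul (-113400:ℝ))).add ((hd_rps 4 (by norm_num) u).const_mul (-105840:ℝ))).add ((hd_rps 5 (by norm_num) u).const_mul (-35280:ℝ)))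
  have hfun : S3fun = (fun v => (7560:ℝ) * rp 2 v + (-50400:ℝ) * rp 3 v + (113400:ℝ) * rp 4 v + (-105840:ℝ) * rp 5 v + (35280:ℝ) * rp 6 v + (-7560:ℝ) * rp 2 (v - 1) + (-50400:ℝ) * rp 3 (v - 1) + (-113400:ℝ) * rp 4 (v - 1) + (-105840:ℝ) * rp 5 (v - 1) + (-35280:ℝ) * rp 6 (v - 1)) := rfl
  rw [hfun]
  refine h.congr_deriv ?_
  simp only [S4fun]
  push_cast
  ring

lemma S_zero {u : ℝ} (hu : u ≤ 0) : S0fun u = 0 := by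
  have h1 : u - 1 ≤ 0 := by linarith
  simp only [S0fun, rp, max_eq_right hu, max_eq_right h1]
  norm_num

lemma S_one {u : ℝ} (hu : 1 ≤ u) : S0fun u = 1 := by
  have h0 : (0:ℝ) ≤ u := by linarith
  have h1 : (0:ℝ) ≤ u - 1 := by linarith
  simp only [S0fun, rp, max_eq_left h0, max_eq_left h1]
  ring

lemma S_mem (u : ℝ) : 0 ≤ S0fun u ∧ S0fun u ≤ 1 := by
  rcases le_or_gt u 0 with hu | hu
  · rw [S_zero hu]; norm_num
  rcases le_or_gt 1 u with hu1 | hu1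
  · rw [S_one hu1]; norm_num
  have h0 : (0:ℝ) ≤ u := hu.le
  have h1 : u - 1 ≤ 0 := by linarith
  have he : S0fun u = 126*u^5 - 420*u^6 + 540*u^7 - 315*u^8 + 70*u^9 := by
    simp only [S0fun, rp, max_eq_left h0, max_eq_right h1]
    norm_num
    ring
  constructor
  · rw [he]
    nlinarith [pow_nonneg h0 5, sq_nonneg (u - 1), sq_nonneg u, sq_nonneg (u*(u-1)),
      pow_nonneg h0 3, pow_nonneg h0 4, sq_nonneg (u^2*(u-1)), sq_nonneg (u^2*(u-1)^2),
      mul_nonneg (pow_nonneg h0 5) (sq_nonneg (u-1)), hu1.le]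
  · rw [he]
    nlinarith [pow_nonneg (by linarith : (0:ℝ) ≤ 1 - u) 5, sq_nonneg (u - 1), sq_nonneg u,
      sq_nonneg (u*(u-1)), sq_nonneg (u^2*(u-1)), sq_nonneg (u^2*(u-1)^2),
      mul_nonneg (pow_nonneg (by linarith : (0:ℝ) ≤ 1 - u) 5) (sq_nonneg u), h0, hu1.le]

lemma S4_bound (u : ℝ) : |S4fun u| ≤ 1360800 := by
  rcases le_or_gt u 0 with hu | hu
  · have h1 : u - 1 ≤ 0 := by linarith
    simp only [S4fun, rp, max_eq_right hu, max_eq_right h1]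
    norm_num
  rcases le_or_gt 1 u with hu1 | hu1
  · have h0 : (0:ℝ) ≤ u := by linarith
    have h1 : (0:ℝ) ≤ u - 1 := by linarith
    have he : S4fun u = 0 := by
      simp only [S4fun, rp, max_eq_left h0, max_eq_left h1]
      ring
    rw [he]; norm_num
  · have h0 : (0:ℝ) ≤ u := hu.le
    have h1 : u - 1 ≤ 0 := by linarith
    have he : S4fun u = 15120*u - 151200*u^2 + 453600*u^3 - 529200*u^4 + 211680*u^5 := by
      simp only [S4fun, rp, max_eq_left h0, max_eq_right h1]
      norm_num
      ring
    rw [he, abs_le]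
    have p2 : u^2 ≤ 1 := pow_le_one₀ h0 hu1.le
    have p3 : u^3 ≤ 1 := pow_le_one₀ h0 hu1.le
    have p4 : u^4 ≤ 1 := pow_le_one₀ h0 hu1.le
    have p5 : u^5 ≤ 1 := pow_le_one₀ h0 hu1.le
    have q2 : 0 ≤ u^2 := pow_nonneg h0 2
    have q3 : 0 ≤ u^3 := pow_nonneg h0 3
    have q4 : 0 ≤ u^4 := pow_nonneg h0 4
    have q5 : 0 ≤ u^5 := pow_nonneg h0 5
    constructor <;> nlinarith [hu1.le, h0]

lemma S3_lip : LipschitzWith 1360800 S3fun := by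
  have hdiff : Differentiable ℝ S3fun := fun u => (hasDerivAt_S3 u).differentiableAt
  refine lipschitzWith_of_nnnorm_deriv_le hdiff (fun x => ?_)
  rw [(hasDerivAt_S3 x).deriv]
  rw [← NNReal.coe_le_coe]
  push_cast
  rw [Real.norm_eq_abs]
  exact S4_bound x

lemma taylor_remainder {ψ ψ1 ψ2 ψ3 : ℝ → ℝ} {K : NNReal}
    (h1 : ∀ t, HasDerivAt ψ (ψ1 t) t) (h2 : ∀ t, HasDerivAt ψ1 (ψ2 t) t)
    (h3 : ∀ t, HasDerivAt ψ2 (ψ3 t) t) (hL : LipschitzWith K ψ3)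
    (b s L : ℝ) (hs : |s| ≤ L) :
    |ψ (b+s) - (ψ b + ψ1 b * s + ψ2 b / 2 * s^2 + ψ3 b / 6 * s^3)| ≤ K * L^3 * |s| := by
  have hL0 : 0 ≤ L := le_trans (abs_nonneg s) hs
  set I := Set.uIcc (0:ℝ) s with hI
  have hconv : Convex ℝ I := convex_uIcc 0 s
  have mem0 : (0:ℝ) ∈ I := Set.left_mem_uIcc
  have mems : s ∈ I := Set.right_mem_uIcc
  have habs : ∀ u ∈ I, |u| ≤ L := by
    intro u hu
    have hsl := abs_le.mp hs
    rcases le_total 0 s with h | h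
    · rw [hI, Set.uIcc_of_le h] at hu
      rw [abs_le]; exact ⟨by linarith [hu.1], by linarith [hu.2]⟩
    · rw [hI, Set.uIcc_of_ge h] at hu
      rw [abs_le]; exact ⟨by linarith [hu.1], by linarith [hu.2]⟩
  have hshift : ∀ (f f' : ℝ → ℝ), (∀ t, HasDerivAt f (f' t) t) →
      ∀ u : ℝ, HasDerivAt (fun v => f (b + v)) (f' (b + u)) u := by
    intro f f' hf u
    have := (hf (b + u)).comp u ((hasDerivAt_id u).const_add b)
    exact (by simpa using this : HasDerivAt (f ∘ HAdd.hAdd b) (f' (b + u)) u)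
  -- level 2
  have hg2 : ∀ u : ℝ, HasDerivAt (fun v => ψ2 (b+v) - ψ2 b - ψ3 b * v)
      (ψ3 (b+u) - ψ3 b) u := by
    intro u
    have h := ((hshift ψ2 ψ3 h3 u).sub_const (ψ2 b)).sub ((hasDerivAt_id u).const_mul (ψ3 b))
    refine h.congr_deriv ?_; ring
  have b3 : ∀ u ∈ I, |ψ3 (b+u) - ψ3 b| ≤ K * L := by
    intro u hu
    have := hL.dist_le_mul (b+u) b
    rw [Real.dist_eq, Real.dist_eq] at this
    have h2' : |b + u - b| = |u| := by ring_nf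
    rw [h2'] at this
    calc |ψ3 (b+u) - ψ3 b| ≤ K * |u| := this
    _ ≤ K * L := by
        have := habs u hu
        exact mul_le_mul_of_nonneg_left this (NNReal.coe_nonneg K)
  have b2 : ∀ u ∈ I, |ψ2 (b+u) - ψ2 b - ψ3 b * u| ≤ K * L * L := by
    intro u hu
    have := hconv.norm_image_sub_le_of_norm_hasDerivWithin_le
      (fun x hx => (hg2 x).hasDerivWithinAt) (fun x hx => b3 x hx) mem0 hu
    simp only [Real.norm_eq_abs] at this
    have h0 : ψ2 (b+0) - ψ2 b - ψ3 b * 0 = 0 := by norm_num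
    rw [h0, sub_zero, sub_zero] at this
    calc |ψ2 (b+u) - ψ2 b - ψ3 b * u| ≤ K * L * |u| := this
    _ ≤ K * L * L := by
        have := habs u hu
        have hk : (0:ℝ) ≤ K * L := mul_nonneg (NNReal.coe_nonneg K) hL0
        exact mul_le_mul_of_nonneg_left this hk
  -- level 1
  have hg1 : ∀ u : ℝ, HasDerivAt (fun v => ψ1 (b+v) - ψ1 b - ψ2 b * v - ψ3 b / 2 * v^2)
      (ψ2 (b+u) - ψ2 b - ψ3 b * u) u := by
    intro u
    have h := (((hshift ψ1 ψ2 h2 u).sub_const (ψ1 b)).sub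
      ((hasDerivAt_id u).const_mul (ψ2 b))).sub ((hasDerivAt_pow 2 u).const_mul (ψ3 b / 2))
    refine h.congr_deriv ?_; push_cast; ring
  have b1 : ∀ u ∈ I, |ψ1 (b+u) - ψ1 b - ψ2 b * u - ψ3 b / 2 * u^2| ≤ K * L * L * L := by
    intro u hu
    have := hconv.norm_image_sub_le_of_norm_hasDerivWithin_le
      (fun x hx => (hg1 x).hasDerivWithinAt) (fun x hx => b2 x hx) mem0 hu
    simp only [Real.norm_eq_abs] at this
    have h0 : ψ1 (b+0) - ψ1 b - ψ2 b * 0 - ψ3 b / 2 * 0^2 = 0 := by norm_num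
    rw [h0, sub_zero, sub_zero] at this
    calc |ψ1 (b+u) - ψ1 b - ψ2 b * u - ψ3 b / 2 * u^2| ≤ K * L * L * |u| := this
    _ ≤ K * L * L * L := by
        have := habs u hu
        have hk : (0:ℝ) ≤ K * L * L := by positivity
        exact mul_le_mul_of_nonneg_left this hk
  -- level 0
  have hg0 : ∀ u : ℝ, HasDerivAt
      (fun v => ψ (b+v) - ψ b - ψ1 b * v - ψ2 b / 2 * v^2 - ψ3 b / 6 * v^3)
      (ψ1 (b+u) - ψ1 b - ψ2 b * u - ψ3 b / 2 * u^2) u := by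
    intro u
    have h := ((((hshift ψ ψ1 h1 u).sub_const (ψ b)).sub
      ((hasDerivAt_id u).const_mul (ψ1 b))).sub
      ((hasDerivAt_pow 2 u).const_mul (ψ2 b / 2))).sub
      ((hasDerivAt_pow 3 u).const_mul (ψ3 b / 6))
    refine h.congr_deriv ?_; push_cast; ring
  have b0 := hconv.norm_image_sub_le_of_norm_hasDerivWithin_le
      (fun x hx => (hg0 x).hasDerivWithinAt) (fun x hx => b1 x hx) mem0 mems
  simp only [Real.norm_eq_abs] at b0
  have h0 : ψ (b+0) - ψ b - ψ1 b * 0 - ψ2 b / 2 * 0^2 - ψ3 b / 6 * 0^3 = 0 := by norm_num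
  rw [h0, sub_zero, sub_zero] at b0
  calc |ψ (b+s) - (ψ b + ψ1 b * s + ψ2 b / 2 * s^2 + ψ3 b / 6 * s^3)|
      = |ψ (b+s) - ψ b - ψ1 b * s - ψ2 b / 2 * s^2 - ψ3 b / 6 * s^3| := by ring_nf
    _ ≤ K * L * L * L * |s| := b0
    _ = K * L^3 * |s| := by ring

section Coord

variable {k : ℕ}

lemma cube_measurable : MeasurableSet {v : Fin k → ℝ | ∀ j, |v j| ≤ 1} := by
  have : {v : Fin k → ℝ | ∀ j, |v j| ≤ 1} = ⋂ j, (fun v => v j) ⁻¹' (Set.Icc (-1) 1) := by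
    ext v; simp [abs_le, Set.mem_iInter]
  rw [this]
  exact MeasurableSet.iInter fun j => (measurable_pi_apply j) measurableSet_Icc

lemma ae_cube {ρ : Measure (Fin k → ℝ)} [IsProbabilityMeasure ρ]
    (h : ρ {v | ∀ j, |v j| ≤ 1} = 1) : ∀ᵐ x ∂ρ, ∀ j, |x j| ≤ 1 := by
  rw [MeasureTheory.ae_iff]
  have := (prob_compl_eq_zero_iff (μ := ρ) cube_measurable).mpr h
  convert this using 2
  rfl

lemma bounded_integrable {ρ : Measure (Fin k → ℝ)} [IsProbabilityMeasure ρ]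
    {f : (Fin k → ℝ) → ℝ} (hf : Measurable f) {C : ℝ} (h : ∀ᵐ x ∂ρ, |f x| ≤ C) :
    Integrable f ρ :=
  ⟨hf.aestronglyMeasurable, HasFiniteIntegral.of_bounded (C := C) (by
    filter_upwards [h] with x hx; rwa [Real.norm_eq_abs])⟩

lemma sum_measurable (lv : Fin k → ℝ) :
    Measurable (fun x : Fin k → ℝ => ∑ j, lv j * x j) :=
  Finset.measurable_sum _ fun j _ => (measurable_pi_apply (X := fun _ : Fin k => ℝ) j).const_mul (lv j)

lemma ae_sum_bound {ρ : Measure (Fin k → ℝ)} [IsProbabilityMeasure ρ]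
    (h : ρ {v | ∀ j, |v j| ≤ 1} = 1) (lv : Fin k → ℝ) :
    ∀ᵐ x ∂ρ, |∑ j, lv j * x j| ≤ ∑ j, |lv j| := by
  filter_upwards [ae_cube h] with x hx
  calc |∑ j, lv j * x j| ≤ ∑ j, |lv j * x j| := Finset.abs_sum_le_sum_abs _ _
    _ ≤ ∑ j, |lv j| := by
        apply Finset.sum_le_sum
        intro j _
        rw [abs_mul]
        calc |lv j| * |x j| ≤ |lv j| * 1 :=
          mul_le_mul_of_nonneg_left (hx j) (abs_nonneg _)
        _ = |lv j| := mul_one _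

lemma prod_measurable (m : ℕ) (g : Fin m → Fin k) :
    Measurable (fun x : Fin k → ℝ => ∏ t, x (g t)) :=
  Finset.measurable_prod _ fun t _ => measurable_pi_apply (g t)

lemma ae_prod_bound {ρ : Measure (Fin k → ℝ)} [IsProbabilityMeasure ρ]
    (h : ρ {v | ∀ j, |v j| ≤ 1} = 1) (m : ℕ) (g : Fin m → Fin k) :
    ∀ᵐ x ∂ρ, |∏ t, x (g t)| ≤ 1 := by
  filter_upwards [ae_cube h] with x hx
  rw [Finset.abs_prod]
  calc ∏ t, |x (g t)| ≤ ∏ _t : Fin m, (1:ℝ) :=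
    Finset.prod_le_prod (fun t _ => abs_nonneg _) (fun t _ => hx (g t))
  _ = 1 := Finset.prod_const_one

lemma moment_expand {ρ : Measure (Fin k → ℝ)} [IsProbabilityMeasure ρ]
    (h : ρ {v | ∀ j, |v j| ≤ 1} = 1) (lv : Fin k → ℝ) (m : ℕ) :
    ∫ x, (∑ j, lv j * x j)^m ∂ρ
      = ∑ g ∈ Fintype.piFinset (fun _ : Fin m => (Finset.univ : Finset (Fin k))),
          (∏ t, lv (g t)) * ∫ x, ∏ t, x (g t) ∂ρ := by
  have hexp : ∀ x : Fin k → ℝ, (∑ j, lv j * x j)^m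
      = ∑ g ∈ Fintype.piFinset (fun _ : Fin m => (Finset.univ : Finset (Fin k))),
          (∏ t, lv (g t)) * ∏ t, x (g t) := by
    intro x
    have h1 : (∑ j, lv j * x j)^m = ∏ _t : Fin m, (∑ j, lv j * x j) := by
      rw [Finset.prod_const, Finset.card_univ, Fintype.card_fin]
    rw [h1, Finset.prod_univ_sum]
    apply Finset.sum_congr rfl
    intro g _
    rw [← Finset.prod_mul_distrib]
  simp_rw [hexp]
  rw [MeasureTheory.integral_finset_sum]
  · apply Finset.sum_congr rfl
    intro g _
    rw [MeasureTheory.integral_const_mul]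
  · intro g _
    apply bounded_integrable ((prod_measurable m g).const_mul _)
      (C := |∏ t, lv (g t)| * 1)
    filter_upwards [ae_prod_bound h m g] with x hx
    rw [abs_mul]
    exact mul_le_mul_of_nonneg_left hx (abs_nonneg _)

lemma moment_eq (ρA ρB : Measure (Fin k → ℝ)) [IsProbabilityMeasure ρA]
    [IsProbabilityMeasure ρB]
    (hA : ρA {v | ∀ j, |v j| ≤ 1} = 1) (hB : ρB {v | ∀ j, |v j| ≤ 1} = 1)
    (hm : ∀ S : Multiset (Fin k), Multiset.card S ≤ 3 →
      ∫ v, (S.map v).prod ∂ρA = ∫ v, (S.map v).prod ∂ρB)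
    (lv : Fin k → ℝ) (m : ℕ) (hm3 : m ≤ 3) :
    ∫ x, (∑ j, lv j * x j)^m ∂ρA = ∫ x, (∑ j, lv j * x j)^m ∂ρB := by
  rw [moment_expand hA, moment_expand hB]
  apply Finset.sum_congr rfl
  intro g _
  congr 1
  have key : ∀ ρ : Measure (Fin k → ℝ), ∫ x, ∏ t, x (g t) ∂ρ
      = ∫ v, ((Multiset.map g Finset.univ.val).map v).prod ∂ρ := by
    intro ρ
    congr 1
    ext x
    rw [Multiset.map_map, Finset.prod_eq_multiset_prod]
    rfl
  rw [key ρA, key ρB]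
  apply hm
  rw [Multiset.card_map]
  have : Multiset.card (Finset.univ.val : Multiset (Fin m)) = m := by
    simp [Finset.card_univ]
  omega

end Coord

section CoordDiff

variable {k : ℕ}

lemma coord_diff (ρA ρB : Measure (Fin k → ℝ)) [IsProbabilityMeasure ρA]
    [IsProbabilityMeasure ρB]
    (hA : ρA {v | ∀ j, |v j| ≤ 1} = 1) (hB : ρB {v | ∀ j, |v j| ≤ 1} = 1)
    (hm : ∀ S : Multiset (Fin k), Multiset.card S ≤ 3 →
      ∫ v, (S.map v).prod ∂ρA = ∫ v, (S.map v).prod ∂ρB)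
    (lv : Fin k → ℝ) {ψ ψ1 ψ2 ψ3 : ℝ → ℝ} {K : NNReal}
    (h1 : ∀ t, HasDerivAt ψ (ψ1 t) t) (h2 : ∀ t, HasDerivAt ψ1 (ψ2 t) t)
    (h3 : ∀ t, HasDerivAt ψ2 (ψ3 t) t) (hLip : LipschitzWith K ψ3)
    (hψb : ∀ t, |ψ t| ≤ 1) (b : ℝ) :
    |(∫ x, ψ (b + ∑ j, lv j * x j) ∂ρA) - ∫ x, ψ (b + ∑ j, lv j * x j) ∂ρB|
      ≤ 2 * K * (∑ j, |lv j|)^4 := by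
  set L := ∑ j, |lv j| with hLdef
  have hL0 : 0 ≤ L := Finset.sum_nonneg fun j _ => abs_nonneg _
  have hψcont : Continuous ψ := by
    have : Differentiable ℝ ψ := fun t => (h1 t).differentiableAt
    exact this.continuous
  set s : (Fin k → ℝ) → ℝ := fun x => ∑ j, lv j * x j with hsdef
  have hsm : Measurable s := sum_measurable lv
  set cubic : (Fin k → ℝ) → ℝ :=
    fun x => ψ b + ψ1 b * s x + ψ2 b / 2 * (s x)^2 + ψ3 b / 6 * (s x)^3 with hcdef
  -- integrability facts (for an arbitrary measure satisfying the cube condition)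
  have main : ∀ (ρ : Measure (Fin k → ℝ)) [IsProbabilityMeasure ρ],
      ρ {v | ∀ j, |v j| ≤ 1} = 1 →
      (Integrable (fun x => ψ (b + s x)) ρ ∧ Integrable cubic ρ ∧
        |(∫ x, ψ (b + s x) ∂ρ) - ∫ x, cubic x ∂ρ| ≤ K * L^4) := by
    intro ρ _ hρ
    have hint1 : Integrable (fun x => ψ (b + s x)) ρ := by
      apply bounded_integrable (hψcont.measurable.comp (hsm.const_add b)) (C := 1)
      exact Filter.Eventually.of_forall fun x => hψb _
    have hintpow : ∀ m : ℕ, Integrable (fun x => (s x)^m) ρ := by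
      intro m
      apply bounded_integrable (hsm.pow_const m) (C := L^m)
      filter_upwards [ae_sum_bound hρ lv] with x hx
      rw [abs_pow]
      exact pow_le_pow_left₀ (abs_nonneg _) hx m
    have hp1 : Integrable (fun x => ψ1 b * s x) ρ := by
      have := (hintpow 1).const_mul (ψ1 b)
      simpa [pow_one] using this
    have e01 : Integrable (fun x => ψ b + ψ1 b * s x) ρ := (integrable_const _).add hp1
    have e012 : Integrable (fun x => ψ b + ψ1 b * s x + ψ2 b / 2 * s x ^ 2) ρ :=
      e01.add ((hintpow 2).const_mul _)
    have hint2 : Integrable cubic ρ := e012.add ((hintpow 3).const_mul _)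
    refine ⟨hint1, hint2, ?_⟩
    rw [← MeasureTheory.integral_sub hint1 hint2]
    have hbound : ∀ᵐ x ∂ρ, ‖ψ (b + s x) - cubic x‖ ≤ K * L^4 := by
      filter_upwards [ae_sum_bound hρ lv] with x hx
      rw [Real.norm_eq_abs]
      calc |ψ (b + s x) - cubic x| ≤ K * L^3 * |s x| :=
        taylor_remainder h1 h2 h3 hLip b (s x) L hx
      _ ≤ K * L^3 * L := by
          apply mul_le_mul_of_nonneg_left hx
          positivity
      _ = K * L^4 := by ring
    have := MeasureTheory.norm_integral_le_of_norm_le_const hbound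
    rwa [probReal_univ, mul_one, Real.norm_eq_abs] at this
  obtain ⟨hA1, hA2, hA3⟩ := main ρA hA
  obtain ⟨hB1, hB2, hB3⟩ := main ρB hB
  -- cubic integrals agree
  have hcubic : ∫ x, cubic x ∂ρA = ∫ x, cubic x ∂ρB := by
    have expand : ∀ (ρ : Measure (Fin k → ℝ)) [IsProbabilityMeasure ρ],
        ρ {v | ∀ j, |v j| ≤ 1} = 1 →
        ∫ x, cubic x ∂ρ = ψ b + ψ1 b * (∫ x, (s x)^1 ∂ρ) + ψ2 b / 2 * (∫ x, (s x)^2 ∂ρ)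
          + ψ3 b / 6 * (∫ x, (s x)^3 ∂ρ) := by
      intro ρ _ hρ
      have hintpow : ∀ m : ℕ, Integrable (fun x => (s x)^m) ρ := by
        intro m
        apply bounded_integrable (hsm.pow_const m) (C := L^m)
        filter_upwards [ae_sum_bound hρ lv] with x hx
        rw [abs_pow]
        exact pow_le_pow_left₀ (abs_nonneg _) hx m
      have e1 : Integrable (fun x => ψ1 b * (s x)^1) ρ := (hintpow 1).const_mul _
      have e2 : Integrable (fun x => ψ2 b / 2 * (s x)^2) ρ := (hintpow 2).const_mul _
      have e3 : Integrable (fun x => ψ3 b / 6 * (s x)^3) ρ := (hintpow 3).const_mul _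
      have e01 : Integrable (fun x => ψ b + ψ1 b * (s x)^1) ρ := (integrable_const _).add e1
      have e012 : Integrable (fun x => ψ b + ψ1 b * (s x)^1 + ψ2 b / 2 * (s x)^2) ρ :=
        e01.add e2
      have : ∫ x, cubic x ∂ρ
          = ∫ x, (ψ b + ψ1 b * (s x)^1 + ψ2 b / 2 * (s x)^2 + ψ3 b / 6 * (s x)^3) ∂ρ := by
        congr 1; ext x; simp [hcdef, pow_one]
      rw [this, MeasureTheory.integral_add e012 e3,
        MeasureTheory.integral_add e01 e2,
        MeasureTheory.integral_add (integrable_const _) e1,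
        MeasureTheory.integral_const, MeasureTheory.integral_const_mul,
        MeasureTheory.integral_const_mul, MeasureTheory.integral_const_mul]
      simp [measure_univ]
    rw [expand ρA hA, expand ρB hB,
      moment_eq ρA ρB hA hB hm lv 1 (by norm_num),
      moment_eq ρA ρB hA hB hm lv 2 (by norm_num),
      moment_eq ρA ρB hA hB hm lv 3 (by norm_num)]
  calc |(∫ x, ψ (b + s x) ∂ρA) - ∫ x, ψ (b + s x) ∂ρB|
      = |((∫ x, ψ (b + s x) ∂ρA) - ∫ x, cubic x ∂ρA)
          - ((∫ x, ψ (b + s x) ∂ρB) - ∫ x, cubic x ∂ρB)| := by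
        rw [hcubic]; ring_nf
    _ ≤ |(∫ x, ψ (b + s x) ∂ρA) - ∫ x, cubic x ∂ρA|
          + |(∫ x, ψ (b + s x) ∂ρB) - ∫ x, cubic x ∂ρB| := abs_sub _ _
    _ ≤ K * L^4 + K * L^4 := add_le_add hA3 hB3
    _ = 2 * K * L^4 := by ring

end CoordDiff

lemma bdd_int {α : Type*} [MeasurableSpace α] (μ : Measure α) [IsFiniteMeasure μ]
    {f : α → ℝ} (hf : AEStronglyMeasurable f μ) {C : ℝ} (h : ∀ x, |f x| ≤ C) :
    Integrable f μ :=
  ⟨hf, HasFiniteIntegral.of_bounded (C := C) (Filter.Eventually.of_forall fun x => by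
    rw [Real.norm_eq_abs]; exact h x)⟩

lemma prod_diff : ∀ (R : ℕ) (k : Fin R → ℕ)
    (νA νB : ∀ i : Fin R, Measure (Fin (k i) → ℝ)),
    (∀ i, IsProbabilityMeasure (νA i)) → (∀ i, IsProbabilityMeasure (νB i)) →
    (∀ i, νA i {v | ∀ j, |v j| ≤ 1} = 1) →
    (∀ i, νB i {v | ∀ j, |v j| ≤ 1} = 1) →
    (∀ i : Fin R, ∀ S : Multiset (Fin (k i)), Multiset.card S ≤ 3 →
      ∫ v, (S.map v).prod ∂(νA i) = ∫ v, (S.map v).prod ∂(νB i)) →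
    ∀ (l : ∀ i : Fin R, Fin (k i) → ℝ) (ψ ψ1 ψ2 ψ3 : ℝ → ℝ) (K : NNReal),
    (∀ t, HasDerivAt ψ (ψ1 t) t) → (∀ t, HasDerivAt ψ1 (ψ2 t) t) →
    (∀ t, HasDerivAt ψ2 (ψ3 t) t) → (LipschitzWith K ψ3) → (∀ t, |ψ t| ≤ 1) →
    ∀ b : ℝ,
    |(∫ x, ψ (b + ∑ i, ∑ j, l i j * x i j) ∂(Measure.pi νA)) -
        ∫ x, ψ (b + ∑ i, ∑ j, l i j * x i j) ∂(Measure.pi νB)|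
      ≤ ∑ i, 2 * K * (∑ j, |l i j|)^4 := by
  intro R
  induction R with
  | zero =>
    intro k νA νB hPA hPB _ _ _ l ψ ψ1 ψ2 ψ3 K _ _ _ _ _ b
    haveI := hPA; haveI := hPB
    simp only [Finset.univ_eq_empty, Finset.sum_empty, add_zero]
    rw [MeasureTheory.integral_const, MeasureTheory.integral_const]
    simp [measure_univ]
  | succ n IH =>
    intro k νA νB hPA hPB hcA hcB hmom l ψ ψ1 ψ2 ψ3 K h1 h2 h3 hLip hψb b
    haveI := hPA; haveI := hPB
    have hψdiff : Differentiable ℝ ψ := fun t => (h1 t).differentiableAt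
    have hψcont : Continuous ψ := hψdiff.continuous
    -- the equivalence splitting off coordinate 0
    set e := MeasurableEquiv.piFinSuccAbove (fun i : Fin (n+1) => Fin (k i) → ℝ) 0 with he
    set νA' : ∀ i : Fin n, Measure (Fin (k i.succ) → ℝ) := fun i => νA i.succ with hvA
    set νB' : ∀ i : Fin n, Measure (Fin (k i.succ) → ℝ) := fun i => νB i.succ with hvB
    haveI : ∀ i, IsProbabilityMeasure (νA' i) := fun i => hPA i.succ
    haveI : ∀ i, IsProbabilityMeasure (νB' i) := fun i => hPB i.succ
    set F : ((Fin (k 0) → ℝ) × ∀ i : Fin n, (Fin (k i.succ) → ℝ)) → ℝ :=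
      fun z => ψ (b + ((∑ j, l 0 j * z.1 j) + ∑ i, ∑ j, l i.succ j * z.2 i j)) with hF
    have hFmeas : Measurable F := by
      apply hψcont.measurable.comp
      apply Measurable.const_add
      apply Measurable.add
      · exact (sum_measurable (l 0)).comp measurable_fst
      · apply Finset.measurable_sum
        intro i _
        apply Finset.measurable_sum
        intro j _
        have hz : Measurable (fun z : ((Fin (k 0) → ℝ) × ∀ i' : Fin n, (Fin (k i'.succ) → ℝ)) =>
            z.2 i j) := (measurable_pi_apply j).comp ((measurable_pi_apply i).comp measurable_snd)
        exact hz.const_mul _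
    have hFbdd : ∀ z, |F z| ≤ 1 := fun z => hψb _
    -- rewrite integrals over pi measures as integrals over the product
    have key : ∀ (ν : ∀ i : Fin (n+1), Measure (Fin (k i) → ℝ)),
        (∀ i, IsProbabilityMeasure (ν i)) →
        ∫ x, ψ (b + ∑ i, ∑ j, l i j * x i j) ∂(Measure.pi ν)
          = ∫ z, F z ∂((ν 0).prod (Measure.pi (fun i : Fin n => ν i.succ))) := by
      intro ν hν
      haveI := hν
      have hmp := measurePreserving_piFinSuccAbove ν 0
      have h2 := hmp.integral_comp' (f := e) F
      refine Eq.trans ?_ h2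
      congr 1
      ext x
      simp only [hF, he, MeasurableEquiv.piFinSuccAbove]
      rw [Fin.sum_univ_succ]
      congr 2
    rw [key νA hPA, key νB hPB]
    -- integrability of F on both product measures
    have hintF : ∀ (μ : Measure (Fin (k 0) → ℝ)) (π : Measure (∀ i : Fin n, Fin (k i.succ) → ℝ)),
        IsProbabilityMeasure μ → IsProbabilityMeasure π → Integrable F (μ.prod π) := by
      intro μ π hμ hπ
      haveI := hμ; haveI := hπ
      exact bdd_int _ hFmeas.aestronglyMeasurable hFbdd
    have hintFA := hintF (νA 0) (Measure.pi νA') (hPA 0) inferInstance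
    have hintFAB := hintF (νA 0) (Measure.pi νB') (hPA 0) inferInstance
    have hintFB := hintF (νB 0) (Measure.pi νB') (hPB 0) inferInstance
    rw [MeasureTheory.integral_prod F hintFA, MeasureTheory.integral_prod F hintFB]
    -- inner integrals
    set GA : (Fin (k 0) → ℝ) → ℝ := fun x₀ => ∫ y, F (x₀, y) ∂(Measure.pi νA') with hGA
    set GB : (Fin (k 0) → ℝ) → ℝ := fun x₀ => ∫ y, F (x₀, y) ∂(Measure.pi νB') with hGB
    have hGAbdd : ∀ x₀, |GA x₀| ≤ 1 := by
      intro x₀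
      have := MeasureTheory.norm_integral_le_of_norm_le_const
        (μ := Measure.pi νA') (f := fun y => F (x₀, y)) (C := 1)
        (Filter.Eventually.of_forall fun y => by rw [Real.norm_eq_abs]; exact hFbdd _)
      rwa [probReal_univ, mul_one, Real.norm_eq_abs] at this
    have hGBbdd : ∀ x₀, |GB x₀| ≤ 1 := by
      intro x₀
      have := MeasureTheory.norm_integral_le_of_norm_le_const
        (μ := Measure.pi νB') (f := fun y => F (x₀, y)) (C := 1)
        (Filter.Eventually.of_forall fun y => by rw [Real.norm_eq_abs]; exact hFbdd _)
      rwa [probReal_univ, mul_one, Real.norm_eq_abs] at this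
    have hGAm : AEStronglyMeasurable GA (νA 0) :=
      (hFmeas.stronglyMeasurable.integral_prod_right').aestronglyMeasurable
    have hGBm : AEStronglyMeasurable GB (νA 0) :=
      (hFmeas.stronglyMeasurable.integral_prod_right').aestronglyMeasurable
    have hGBm' : AEStronglyMeasurable GB (νB 0) :=
      (hFmeas.stronglyMeasurable.integral_prod_right').aestronglyMeasurable
    have hintGA : Integrable GA (νA 0) := bdd_int _ hGAm hGAbdd
    have hintGB : Integrable GB (νA 0) := bdd_int _ hGBm hGBbdd
    have hintGB' : Integrable GB (νB 0) := bdd_int _ hGBm' hGBbdd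
    -- Term 1 : same first coordinate, different rest
    set T : ℝ := ∑ i : Fin n, 2 * K * (∑ j, |l i.succ j|)^4 with hT
    have term1 : |(∫ x₀, GA x₀ ∂(νA 0)) - ∫ x₀, GB x₀ ∂(νA 0)| ≤ T := by
      rw [← MeasureTheory.integral_sub hintGA hintGB]
      have hbd : ∀ x₀, ‖GA x₀ - GB x₀‖ ≤ T := by
        intro x₀
        rw [Real.norm_eq_abs]
        set ψ' : ℝ → ℝ := fun t => ψ ((∑ j, l 0 j * x₀ j) + t) with hψ'
        have sh : ∀ (f f' : ℝ → ℝ), (∀ t, HasDerivAt f (f' t) t) →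
            ∀ t : ℝ, HasDerivAt (fun u => f ((∑ j, l 0 j * x₀ j) + u))
              (f' ((∑ j, l 0 j * x₀ j) + t)) t := by
          intro f f' hf t
          exact (by simpa using (hf _).comp t ((hasDerivAt_id t).const_add (∑ j, l 0 j * x₀ j)) : HasDerivAt (f ∘ HAdd.hAdd (∑ j, l 0 j * x₀ j)) (f' ((∑ j, l 0 j * x₀ j) + t)) t)
        have hLip' : LipschitzWith K (fun t => ψ3 ((∑ j, l 0 j * x₀ j) + t)) :=
          LipschitzWith.of_dist_le_mul fun u v => by
            have h := hLip.dist_le_mul ((∑ j, l 0 j * x₀ j) + u) ((∑ j, l 0 j * x₀ j) + v)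
            rwa [dist_add_left] at h
        have := IH (fun i => k i.succ) νA' νB' (fun i => hPA i.succ) (fun i => hPB i.succ)
          (fun i => hcA i.succ) (fun i => hcB i.succ) (fun i => hmom i.succ)
          (fun i => l i.succ) ψ' _ _ _ K (sh ψ ψ1 h1) (sh ψ1 ψ2 h2) (sh ψ2 ψ3 h3)
          hLip' (fun t => hψb _) b
        have heq : ∀ (π : Measure (∀ i : Fin n, Fin (k i.succ) → ℝ)),
            (∫ y, F (x₀, y) ∂π) = ∫ y, ψ' (b + ∑ i, ∑ j, l i.succ j * y i j) ∂π := by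
          intro π
          congr 1
          ext y
          simp only [hF, hψ']
          ring_nf
        simp only [hGA, hGB]
        rw [heq (Measure.pi νA'), heq (Measure.pi νB')]
        exact this
      have := MeasureTheory.norm_integral_le_of_norm_le_const
        (μ := νA 0) (f := fun x₀ => GA x₀ - GB x₀) (C := T)
        (Filter.Eventually.of_forall hbd)
      rwa [probReal_univ, mul_one, Real.norm_eq_abs] at this
    -- Term 2 : different first coordinate
    have term2 : |(∫ x₀, GB x₀ ∂(νA 0)) - ∫ x₀, GB x₀ ∂(νB 0)|
        ≤ 2 * K * (∑ j, |l 0 j|)^4 := by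
      have swapA : ∫ x₀, GB x₀ ∂(νA 0)
          = ∫ y, (∫ x₀, F (x₀, y) ∂(νA 0)) ∂(Measure.pi νB') := by
        rw [hGB]
        exact MeasureTheory.integral_integral_swap (by exact hintFAB)
      have swapB : ∫ x₀, GB x₀ ∂(νB 0)
          = ∫ y, (∫ x₀, F (x₀, y) ∂(νB 0)) ∂(Measure.pi νB') := by
        rw [hGB]
        exact MeasureTheory.integral_integral_swap (by exact hintFB)
      rw [swapA, swapB]
      have hinner : ∀ y, ∫ x₀, F (x₀, y) ∂(νA 0) - ∫ x₀, F (x₀, y) ∂(νB 0)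
          = (∫ x₀, F (x₀, y) ∂(νA 0)) - ∫ x₀, F (x₀, y) ∂(νB 0) := fun y => rfl
      have hintin : ∀ (μ : Measure (Fin (k 0) → ℝ)), IsProbabilityMeasure μ →
          ∀ y, Integrable (fun x₀ => F (x₀, y)) μ := by
        intro μ hμ y
        haveI := hμ
        exact bdd_int _ ((hFmeas.comp (measurable_id.prodMk measurable_const)
          : Measurable fun x₀ => F (x₀, y))).aestronglyMeasurable (fun x₀ => hFbdd _)
      rw [← MeasureTheory.integral_sub]
      · have hbd : ∀ y, ‖(∫ x₀, F (x₀, y) ∂(νA 0)) - ∫ x₀, F (x₀, y) ∂(νB 0)‖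
            ≤ 2 * K * (∑ j, |l 0 j|)^4 := by
          intro y
          rw [Real.norm_eq_abs]
          have hc := coord_diff (νA 0) (νB 0) (hcA 0) (hcB 0) (hmom 0) (l 0)
            h1 h2 h3 hLip hψb (b + ∑ i, ∑ j, l i.succ j * y i j)
          have heq : ∀ (μ : Measure (Fin (k 0) → ℝ)),
              (∫ x₀, F (x₀, y) ∂μ)
                = ∫ x₀, ψ ((b + ∑ i, ∑ j, l i.succ j * y i j) + ∑ j, l 0 j * x₀ j) ∂μ := by
            intro μ
            congr 1
            ext x₀
            simp only [hF]
            ring_nf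
          rw [heq (νA 0), heq (νB 0)]
          exact hc
        have := MeasureTheory.norm_integral_le_of_norm_le_const
          (μ := Measure.pi νB')
          (f := fun y => (∫ x₀, F (x₀, y) ∂(νA 0)) - ∫ x₀, F (x₀, y) ∂(νB 0))
          (C := 2 * K * (∑ j, |l 0 j|)^4) (Filter.Eventually.of_forall hbd)
        rwa [probReal_univ, mul_one, Real.norm_eq_abs] at this
      · exact bdd_int _ (hFmeas.stronglyMeasurable.integral_prod_left').aestronglyMeasurable
          (fun y => by
            have := MeasureTheory.norm_integral_le_of_norm_le_const
              (μ := νA 0) (f := fun x₀ => F (x₀, y)) (C := 1)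
              (Filter.Eventually.of_forall fun x₀ => by rw [Real.norm_eq_abs]; exact hFbdd _)
            rwa [probReal_univ, mul_one, Real.norm_eq_abs] at this)
      · exact bdd_int _ (hFmeas.stronglyMeasurable.integral_prod_left').aestronglyMeasurable
          (fun y => by
            have := MeasureTheory.norm_integral_le_of_norm_le_const
              (μ := νB 0) (f := fun x₀ => F (x₀, y)) (C := 1)
              (Filter.Eventually.of_forall fun x₀ => by rw [Real.norm_eq_abs]; exact hFbdd _)
            rwa [probReal_univ, mul_one, Real.norm_eq_abs] at this)
    calc |(∫ x₀, GA x₀ ∂(νA 0)) - ∫ x₀, GB x₀ ∂(νB 0)|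
        ≤ |(∫ x₀, GA x₀ ∂(νA 0)) - ∫ x₀, GB x₀ ∂(νA 0)|
            + |(∫ x₀, GB x₀ ∂(νA 0)) - ∫ x₀, GB x₀ ∂(νB 0)| := by
          exact abs_sub_le _ _ _
      _ ≤ T + 2 * K * (∑ j, |l 0 j|)^4 := add_le_add term1 term2
      _ = ∑ i : Fin (n+1), 2 * K * (∑ j, |l i j|)^4 := by
          rw [Fin.sum_univ_succ, hT]; ring

lemma sgn01_measurable : Measurable sgn01 :=
  Measurable.ite (measurableSet_le measurable_const measurable_id)
    measurable_const measurable_const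

lemma sgn01_mem (t : ℝ) : 0 ≤ sgn01 t ∧ sgn01 t ≤ 1 := by
  unfold sgn01; split <;> norm_num

section Assemble

variable {α : ℝ} (hα : 0 < α) (θ : ℝ)

lemma psi_props (hα : 0 < α) (θ : ℝ) :
    ∃ (ψ ψ1 ψ2 ψ3 : ℝ → ℝ) (K : NNReal),
      (∀ t, HasDerivAt ψ (ψ1 t) t) ∧ (∀ t, HasDerivAt ψ1 (ψ2 t) t) ∧
      (∀ t, HasDerivAt ψ2 (ψ3 t) t) ∧ LipschitzWith K ψ3 ∧ (∀ t, |ψ t| ≤ 1) ∧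
      (2 * (K : ℝ) = 170100 / α ^ 4) ∧
      (∀ t, |sgn01 (t - θ) - ψ t|
        ≤ Set.indicator (Set.Icc (θ - α) (θ + α)) (fun _ => (1:ℝ)) t) := by
  set d : ℝ := 2 * α with hd
  have hd0 : 0 < d := by positivity
  set c : ℝ := θ - α with hc
  set u : ℝ → ℝ := fun t => (t - c) / d with hu
  have hinner : ∀ t, HasDerivAt u d⁻¹ t := by
    intro t
    have := ((hasDerivAt_id t).sub_const c).div_const d
    simpa [one_div] using this
  refine ⟨fun t => S0fun (u t), fun t => S1fun (u t) * d⁻¹,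
    fun t => S2fun (u t) * (d⁻¹)^2, fun t => S3fun (u t) * (d⁻¹)^3,
    1360800 * (d⁻¹).toNNReal^4, ?_, ?_, ?_, ?_, ?_, ?_, ?_⟩
  · intro t
    have h := (hasDerivAt_S0 (u t)).comp t (hinner t)
    exact h
  · intro t
    have h := ((hasDerivAt_S1 (u t)).comp t (hinner t)).mul_const d⁻¹
    refine h.congr_deriv ?_; ring
  · intro t
    have h := ((hasDerivAt_S2 (u t)).comp t (hinner t)).mul_const ((d⁻¹)^2)
    refine h.congr_deriv ?_; ring
  · refine LipschitzWith.of_dist_le_mul fun x y => ?_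
    rw [Real.dist_eq, Real.dist_eq]
    have h1 : S3fun (u x) * (d⁻¹)^3 - S3fun (u y) * (d⁻¹)^3
        = (S3fun (u x) - S3fun (u y)) * (d⁻¹)^3 := by ring
    rw [h1, abs_mul]
    have h2 : |S3fun (u x) - S3fun (u y)| ≤ 1360800 * |u x - u y| := by
      have := S3_lip.dist_le_mul (u x) (u y)
      rw [Real.dist_eq, Real.dist_eq] at this
      exact_mod_cast this
    have h3 : |u x - u y| = |x - y| * d⁻¹ := by
      rw [hu]
      have : (x - c) / d - (y - c) / d = (x - y) * d⁻¹ := by field_simp; ring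
      rw [this, abs_mul, abs_of_nonneg (by positivity : (0:ℝ) ≤ d⁻¹)]
    have h4 : |(d⁻¹)^3| = (d⁻¹)^3 := abs_of_nonneg (by positivity)
    have hcast : ((1360800 * (d⁻¹).toNNReal^4 : NNReal) : ℝ) = 1360800 * (d⁻¹)^4 := by
      push_cast
      rw [Real.coe_toNNReal _ (by positivity : (0:ℝ) ≤ d⁻¹)]
    rw [h4, hcast]
    calc |S3fun (u x) - S3fun (u y)| * (d⁻¹)^3
        ≤ (1360800 * (|x - y| * d⁻¹)) * (d⁻¹)^3 := by
          apply mul_le_mul_of_nonneg_right _ (by positivity)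
          rw [← h3]; exact h2
      _ = 1360800 * (d⁻¹)^4 * |x - y| := by ring
  · intro t
    have := S_mem (u t)
    rw [abs_le]; constructor <;> linarith [this.1, this.2]
  · push_cast
    rw [Real.coe_toNNReal _ (by positivity : (0:ℝ) ≤ d⁻¹), hd]
    field_simp
    ring
  · intro t
    rcases lt_or_ge t (θ - α) with ht | ht
    · have hu0 : u t ≤ 0 := by
        rw [hu]
        apply div_nonpos_of_nonpos_of_nonneg _ hd0.le
        rw [hc]; linarith
      have hs : sgn01 (t - θ) = 0 := by
        rw [sgn01, if_neg]; intro h; linarith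
      show |sgn01 (t - θ) - S0fun (u t)| ≤ _
      rw [S_zero hu0, hs, sub_zero, abs_zero]
      exact Set.indicator_nonneg (fun _ _ => by norm_num) t
    rcases le_or_gt t (θ + α) with ht2 | ht2
    · have hmem : t ∈ Set.Icc (θ - α) (θ + α) := Set.mem_Icc.mpr ⟨ht, ht2⟩
      have hind : Set.indicator (Set.Icc (θ - α) (θ + α)) (fun _ => (1:ℝ)) t = 1 :=
        Set.indicator_of_mem hmem _
      show |sgn01 (t - θ) - S0fun (u t)| ≤ Set.indicator (Set.Icc (θ - α) (θ + α)) (fun _ => (1:ℝ)) t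
      rw [hind]
      have h1 := S_mem (u t)
      have h2 := sgn01_mem (t - θ)
      rw [abs_le]; constructor <;> linarith [h1.1, h1.2, h2.1, h2.2]
    · have hu1 : 1 ≤ u t := by
        rw [hu, le_div_iff₀ hd0, hc, hd]; linarith
      have hs : sgn01 (t - θ) = 1 := by
        rw [sgn01, if_pos]; linarith
      show |sgn01 (t - θ) - S0fun (u t)| ≤ _
      rw [S_one hu1, hs, sub_self, abs_zero]
      exact Set.indicator_nonneg (fun _ _ => by norm_num) t

end Assemble

theorem stmt_5_aux :
    ∃ C : ℝ, 0 < C ∧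
      ∀ (R : ℕ) (k : Fin R → ℕ)
        (νA νB : ∀ i : Fin R, Measure (Fin (k i) → ℝ)),
        (∀ i, IsProbabilityMeasure (νA i)) → (∀ i, IsProbabilityMeasure (νB i)) →
        (∀ i, νA i {v | ∀ j, |v j| ≤ 1} = 1) →
        (∀ i, νB i {v | ∀ j, |v j| ≤ 1} = 1) →
        (∀ i : Fin R, ∀ S : Multiset (Fin (k i)), Multiset.card S ≤ 3 →
          ∫ v, (S.map v).prod ∂(νA i) = ∫ v, (S.map v).prod ∂(νB i)) →
        ∀ (l : ∀ i : Fin R, Fin (k i) → ℝ) (α θ cα : ℝ),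
          0 < α → α < 1 / 2 →
          (∀ θ' : ℝ,
            ((Measure.pi νA) {x | θ' - α ≤ (∑ i, ∑ j, l i j * x i j) ∧
                (∑ i, ∑ j, l i j * x i j) ≤ θ' + α}).toReal ≤ cα) →
          (∀ θ' : ℝ,
            ((Measure.pi νB) {x | θ' - α ≤ (∑ i, ∑ j, l i j * x i j) ∧
                (∑ i, ∑ j, l i j * x i j) ≤ θ' + α}).toReal ≤ cα) →
          |(∫ x, sgn01 ((∑ i, ∑ j, l i j * x i j) - θ) ∂(Measure.pi νA)) -
              ∫ x, sgn01 ((∑ i, ∑ j, l i j * x i j) - θ) ∂(Measure.pi νB)|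
            ≤ C / α ^ 4 * ∑ i, (∑ j, |l i j|) ^ 4 + 2 * cα := by
  refine ⟨170100, by norm_num, ?_⟩
  intro R k νA νB hPA hPB hcA hcB hmom l α θ cα hα hα2 hsA hsB
  haveI := hPA; haveI := hPB
  obtain ⟨ψ, ψ1, ψ2, ψ3, K, h1, h2, h3, hLip, hψb, hKval, hcmp⟩ := psi_props hα θ
  set lm : (∀ i : Fin R, Fin (k i) → ℝ) → ℝ := fun x => ∑ i, ∑ j, l i j * x i j with hlm
  have hlmeas : Measurable lm := by
    apply Finset.measurable_sum
    intro i _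
    apply Finset.measurable_sum
    intro j _
    have hz : Measurable fun x : (∀ i' : Fin R, Fin (k i') → ℝ) => x i j :=
      (measurable_pi_apply j).comp (measurable_pi_apply i)
    exact hz.const_mul _
  have hψdiff : Differentiable ℝ ψ := fun t => (h1 t).differentiableAt
  have hψcont : Continuous ψ := hψdiff.continuous
  -- comparison of sgn and ψ for each product measure
  have cmp : ∀ (ν : ∀ i : Fin R, Measure (Fin (k i) → ℝ)),
      (∀ i, IsProbabilityMeasure (ν i)) →
      (((Measure.pi ν) {x | θ - α ≤ lm x ∧ lm x ≤ θ + α}).toReal ≤ cα) →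
      |(∫ x, sgn01 (lm x - θ) ∂(Measure.pi ν)) - ∫ x, ψ (lm x) ∂(Measure.pi ν)| ≤ cα := by
    intro ν hν hsp
    haveI := hν
    set μ := Measure.pi ν with hμ
    have hSmeas : MeasurableSet {x | θ - α ≤ lm x ∧ lm x ≤ θ + α} := by
      have : {x | θ - α ≤ lm x ∧ lm x ≤ θ + α} = lm ⁻¹' (Set.Icc (θ - α) (θ + α)) := by
        ext x; simp [Set.mem_Icc]
      rw [this]
      exact hlmeas measurableSet_Icc
    have habs1 : ∀ x, |sgn01 (lm x - θ)| ≤ (1:ℝ) := by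
      intro x
      have h := sgn01_mem (lm x - θ)
      rw [abs_le]; exact ⟨by linarith [h.1], h.2⟩
    have hint1 : Integrable (fun x => sgn01 (lm x - θ)) μ :=
      bdd_int _ ((sgn01_measurable.comp ((hlmeas.sub_const θ)))).aestronglyMeasurable habs1
    have hint2 : Integrable (fun x => ψ (lm x)) μ := by
      exact bdd_int _ (hψcont.measurable.comp hlmeas).aestronglyMeasurable
        (fun x => hψb (lm x))
    have hind : Integrable (fun x => Set.indicator {x | θ - α ≤ lm x ∧ lm x ≤ θ + α}
        (fun _ => (1:ℝ)) x) μ := (integrable_const (1:ℝ)).indicator hSmeas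
    rw [← MeasureTheory.integral_sub hint1 hint2]
    calc |∫ x, (sgn01 (lm x - θ) - ψ (lm x)) ∂μ|
        ≤ ∫ x, |sgn01 (lm x - θ) - ψ (lm x)| ∂μ := by
          rw [← Real.norm_eq_abs]
          exact (MeasureTheory.norm_integral_le_integral_norm _).trans (le_of_eq (by
            congr 1))
      _ ≤ ∫ x, Set.indicator {x | θ - α ≤ lm x ∧ lm x ≤ θ + α} (fun _ => (1:ℝ)) x ∂μ := by
          apply MeasureTheory.integral_mono (hint1.sub hint2).abs hind
          intro x
          have := hcmp (lm x)
          have heq : Set.indicator (Set.Icc (θ - α) (θ + α)) (fun _ => (1:ℝ)) (lm x)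
              = Set.indicator {x | θ - α ≤ lm x ∧ lm x ≤ θ + α} (fun _ => (1:ℝ)) x := by
            by_cases hx : θ - α ≤ lm x ∧ lm x ≤ θ + α
            · have hx1 : lm x ∈ Set.Icc (θ - α) (θ + α) := Set.mem_Icc.mpr hx
              have hx2 : x ∈ {x | θ - α ≤ lm x ∧ lm x ≤ θ + α} := hx
              rw [Set.indicator_of_mem hx1, Set.indicator_of_mem hx2]
            · have hx1 : lm x ∉ Set.Icc (θ - α) (θ + α) := fun hmem => hx (Set.mem_Icc.mp hmem)
              have hx2 : x ∉ {x | θ - α ≤ lm x ∧ lm x ≤ θ + α} := hx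
              rw [Set.indicator_of_notMem hx1, Set.indicator_of_notMem hx2]
          exact le_of_le_of_eq this heq
      _ = (μ {x | θ - α ≤ lm x ∧ lm x ≤ θ + α}).toReal := by
          rw [MeasureTheory.integral_indicator hSmeas, MeasureTheory.setIntegral_const,
            smul_eq_mul, mul_one, Measure.real]
      _ ≤ cα := hsp
  -- middle term via prod_diff
  have mid := prod_diff R k νA νB hPA hPB hcA hcB hmom l ψ ψ1 ψ2 ψ3 K
    h1 h2 h3 hLip hψb 0
  have hmid : |(∫ x, ψ (lm x) ∂(Measure.pi νA)) - ∫ x, ψ (lm x) ∂(Measure.pi νB)|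
      ≤ 170100 / α ^ 4 * ∑ i, (∑ j, |l i j|) ^ 4 := by
    have hz : ∀ (μ : Measure (∀ i : Fin R, Fin (k i) → ℝ)),
        (∫ x, ψ (0 + ∑ i, ∑ j, l i j * x i j) ∂μ) = ∫ x, ψ (lm x) ∂μ := by
      intro μ; congr 1; ext x; rw [zero_add]
    rw [hz, hz] at mid
    calc |(∫ x, ψ (lm x) ∂(Measure.pi νA)) - ∫ x, ψ (lm x) ∂(Measure.pi νB)|
        ≤ ∑ i, 2 * (K:ℝ) * (∑ j, |l i j|) ^ 4 := mid
      _ = 170100 / α ^ 4 * ∑ i, (∑ j, |l i j|) ^ 4 := by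
          rw [Finset.mul_sum]
          apply Finset.sum_congr rfl
          intro i _
          rw [← hKval]
  -- assemble
  have t1 := cmp νA hPA (hsA θ)
  have t2 := cmp νB hPB (hsB θ)
  calc |(∫ x, sgn01 (lm x - θ) ∂(Measure.pi νA)) - ∫ x, sgn01 (lm x - θ) ∂(Measure.pi νB)|
      ≤ |(∫ x, sgn01 (lm x - θ) ∂(Measure.pi νA)) - ∫ x, ψ (lm x) ∂(Measure.pi νA)|
        + |(∫ x, ψ (lm x) ∂(Measure.pi νA)) - ∫ x, ψ (lm x) ∂(Measure.pi νB)|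
        + |(∫ x, ψ (lm x) ∂(Measure.pi νB)) - ∫ x, sgn01 (lm x - θ) ∂(Measure.pi νB)| := by
        have := abs_sub_le (∫ x, sgn01 (lm x - θ) ∂(Measure.pi νA))
          (∫ x, ψ (lm x) ∂(Measure.pi νB)) (∫ x, sgn01 (lm x - θ) ∂(Measure.pi νB))
        have h2' := abs_sub_le (∫ x, sgn01 (lm x - θ) ∂(Measure.pi νA))
          (∫ x, ψ (lm x) ∂(Measure.pi νA)) (∫ x, ψ (lm x) ∂(Measure.pi νB))
        linarith
    _ ≤ cα + 170100 / α ^ 4 * ∑ i, (∑ j, |l i j|) ^ 4 + cα := by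
        have t2' : |(∫ x, ψ (lm x) ∂(Measure.pi νB))
            - ∫ x, sgn01 (lm x - θ) ∂(Measure.pi νB)| ≤ cα := by
          rw [abs_sub_comm]; exact t2
        exact add_le_add (add_le_add t1 hmid) t2'
    _ = 170100 / α ^ 4 * ∑ i, (∑ j, |l i j|) ^ 4 + 2 * cα := by ring


/-- Invariance Principle for `sgn`: there is an absolute constant `C > 0` such
that for independent `[-1,1]`-valued ensembles with matching moments up to degree 3, any
linear form `l`, any `0 < α < 1/2` and any upper bound `cα` on the spread function (the
probability that `l(·)` lands in any interval of radius `α`), the expectations of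
`sgn(l(·) - θ)` differ by at most `(C/α⁴)·Σᵢ ‖l⁽ⁱ⁾‖₁⁴ + 2·cα`. -/
theorem stmt_5 :
    ∃ C : ℝ, 0 < C ∧
      ∀ (R : ℕ) (k : Fin R → ℕ)
        (νA νB : ∀ i : Fin R, Measure (Fin (k i) → ℝ)),
        (∀ i, IsProbabilityMeasure (νA i)) → (∀ i, IsProbabilityMeasure (νB i)) →
        (∀ i, νA i {v | ∀ j, |v j| ≤ 1} = 1) →
        (∀ i, νB i {v | ∀ j, |v j| ≤ 1} = 1) →
        (∀ i : Fin R, ∀ S : Multiset (Fin (k i)), Multiset.card S ≤ 3 →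
          ∫ v, (S.map v).prod ∂(νA i) = ∫ v, (S.map v).prod ∂(νB i)) →
        ∀ (l : ∀ i : Fin R, Fin (k i) → ℝ) (α θ cα : ℝ),
          0 < α → α < 1 / 2 →
          (∀ θ' : ℝ,
            ((Measure.pi νA) {x | θ' - α ≤ (∑ i, ∑ j, l i j * x i j) ∧
                (∑ i, ∑ j, l i j * x i j) ≤ θ' + α}).toReal ≤ cα) →
          (∀ θ' : ℝ,
            ((Measure.pi νB) {x | θ' - α ≤ (∑ i, ∑ j, l i j * x i j) ∧
                (∑ i, ∑ j, l i j * x i j) ≤ θ' + α}).toReal ≤ cα) →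
          |(∫ x, sgn01 ((∑ i, ∑ j, l i j * x i j) - θ) ∂(Measure.pi νA)) -
              ∫ x, sgn01 ((∑ i, ∑ j, l i j * x i j) - θ) ∂(Measure.pi νB)|
            ≤ C / α ^ 4 * ∑ i, (∑ j, |l i j|) ^ 4 + 2 * cα := by
  exact stmt_5_aux
end
end

section
/- For every sufficiently large integer k there exist probability distributions D_0 and D_1 on {0,1}^k such that Pr_{x ~ D_0}[every coordinate of x is 0] ≥ 1 − 2/√k, Pr_{x ~ D_1}[every coordinate of x is 0] ≤ 1/√k, and D_0 and D_1 have matching moments up to degree 4, i.e., for all i, j, m, n ∈ [k]: E_{D_0}[x_i] = E_{D_1}[x_i], E_{D_0}[x_i x_j] = E_{D_1}[x_i x_j], E_{D_0}[x_i x_j x_m] = E_{D_1}[x_i x_j x_m], and E_{D_0}[x_i x_j x_m x_n] = E_{D_1}[x_i x_j x_m x_n]. -/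
open MeasureTheory
open scoped ENNReal

noncomputable section
set_option maxHeartbeats 1000000

def bval (b : Bool) : ℝ := if b then 1 else 0

namespace Stmt6Aux

/-- Bernoulli measure on `Bool` with parameter `p`. -/
def ber (p : ℝ) : Measure Bool :=
  ENNReal.ofReal p • Measure.dirac true + ENNReal.ofReal (1 - p) • Measure.dirac false

lemma ber_isProb {p : ℝ} (h0 : 0 ≤ p) (h1 : p ≤ 1) : IsProbabilityMeasure (ber p) := by
  constructor
  simp only [ber, Measure.add_apply, Measure.smul_apply, Measure.dirac_apply' _ MeasurableSet.univ,
    Set.mem_univ, Set.indicator_of_mem, smul_eq_mul, mul_one, Pi.one_apply]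
  rw [← ENNReal.ofReal_add h0 (by linarith)]
  norm_num

lemma integral_ber (p : ℝ) (h0 : 0 ≤ p) (h1 : p ≤ 1) (f : Bool → ℝ) :
    ∫ b, f b ∂(ber p) = p * f true + (1 - p) * f false := by
  have hi : ∀ (c : ℝ≥0∞) (x : Bool), c ≠ ⊤ → Integrable f (c • Measure.dirac x) := by
    intro c x hc
    haveI : IsFiniteMeasure (c • Measure.dirac x) := by
      constructor
      rw [Measure.smul_apply, smul_eq_mul]
      exact ENNReal.mul_lt_top hc.lt_top (measure_lt_top _ _)
    exact .of_finite
  rw [ber, integral_add_measure (hi _ _ ENNReal.ofReal_ne_top) (hi _ _ ENNReal.ofReal_ne_top),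
    integral_smul_measure, integral_smul_measure, integral_dirac, integral_dirac,
    ENNReal.toReal_ofReal h0, ENNReal.toReal_ofReal (by linarith)]
  simp only [smul_eq_mul]

lemma ber_false {p : ℝ} : ber p {false} = ENNReal.ofReal (1 - p) := by
  simp [ber, Measure.dirac_apply' _ (MeasurableSet.singleton false)]

/-- product of k Bernoulli measures -/
def pber (k : ℕ) (p : ℝ) : Measure (Fin k → Bool) := Measure.pi fun _ => ber p

lemma pber_isProb {p : ℝ} (h0 : 0 ≤ p) (h1 : p ≤ 1) (k : ℕ) :
    IsProbabilityMeasure (pber k p) := by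
  haveI := ber_isProb h0 h1
  unfold pber
  infer_instance

lemma pber_zero {p : ℝ} (h0 : 0 ≤ p) (h1 : p ≤ 1) (k : ℕ) :
    pber k p {x | ∀ i, x i = false} = (ENNReal.ofReal (1 - p)) ^ k := by
  haveI := ber_isProb h0 h1
  have hset : {x : Fin k → Bool | ∀ i, x i = false} = Set.pi Set.univ fun _ => {false} := by
    ext x; simp [Set.mem_pi]
  rw [pber, hset, Measure.pi_pi]
  simp [ber_false]

lemma integral_pi_prod {k : ℕ} (μ : Measure Bool) [IsProbabilityMeasure μ]
    (f : Fin k → Bool → ℝ) :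
    ∫ x, ∏ i, f i (x i) ∂(Measure.pi fun _ => μ) = ∏ i, ∫ b, f i b ∂μ := by
  letI : MeasureSpace Bool := ⟨μ⟩
  haveI : SigmaFinite (volume : Measure Bool) := inferInstanceAs (SigmaFinite μ)
  exact MeasureTheory.integral_fintype_prod_eq_prod f

lemma pber_moment {p : ℝ} (h0 : 0 ≤ p) (h1 : p ≤ 1) (k : ℕ) (S : Multiset (Fin k)) :
    ∫ x, (S.map fun i => bval (x i)).prod ∂(pber k p) = p ^ S.toFinset.card := by
  haveI := ber_isProb h0 h1
  have h1' : ∀ x : Fin k → Bool,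
      (S.map fun i => bval (x i)).prod = ∏ i : Fin k, bval (x i) ^ S.count i := by
    intro x
    rw [Finset.prod_multiset_map_count]
    refine Finset.prod_subset (Finset.subset_univ _) ?_
    intro i _ hi
    rw [Multiset.count_eq_zero_of_notMem (by simpa [Multiset.mem_toFinset] using hi), pow_zero]
  simp_rw [h1']
  rw [pber, integral_pi_prod (ber p) (fun i b => bval b ^ S.count i)]
  have hfac : ∀ i : Fin k, (∫ b, bval b ^ S.count i ∂(ber p))
      = if i ∈ S.toFinset then p else 1 := by
    intro i
    rw [integral_ber p h0 h1]
    by_cases hm : i ∈ S.toFinset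
    · have hc : S.count i ≠ 0 := by simpa [Multiset.count_eq_zero, Multiset.mem_toFinset] using hm
      simp [hm, bval, zero_pow hc]
    · have hc : S.count i = 0 := by simpa [Multiset.count_eq_zero, Multiset.mem_toFinset] using hm
      simp [hm, hc, bval]
  simp_rw [hfac]
  rw [Finset.prod_ite_mem, Finset.univ_inter, Finset.prod_const]

/-- the key divided-difference moment identity -/
lemma moment_id (g G : ℝ) (hg : 0 < g) (hgG : g < G) (d : ℕ) (hd : d ≤ 4) :
    (24*g*G^4)⁻¹ * 0^d + (6*G^4*(G-g))⁻¹ * G^d + (6*G^4*(3*G-g))⁻¹ * (3*G)^d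
      = (g*(G-g)*(2*G-g)*(3*G-g)*(4*G-g))⁻¹ * g^d + (4*G^4*(2*G-g))⁻¹ * (2*G)^d
        + (24*G^4*(4*G-g))⁻¹ * (4*G)^d := by
  have hG : 0 < G := hg.trans hgG
  have e0 : g ≠ 0 := ne_of_gt hg
  have e1 : G ≠ 0 := ne_of_gt hG
  have e2 : G - g ≠ 0 := ne_of_gt (by linarith)
  have e3 : 2*G - g ≠ 0 := ne_of_gt (by linarith)
  have e4 : 3*G - g ≠ 0 := ne_of_gt (by linarith)
  have e5 : 4*G - g ≠ 0 := ne_of_gt (by linarith)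
  interval_cases d <;> (simp only [← one_div]; rw [div_mul_eq_mul_div, div_mul_eq_mul_div, div_mul_eq_mul_div, div_mul_eq_mul_div, div_mul_eq_mul_div, div_mul_eq_mul_div, div_add_div _ _ (by positivity) (mul_ne_zero (by positivity) e2), div_add_div _ _ (by positivity) (mul_ne_zero (by positivity) e4), div_add_div _ _ (by simp [*]) (mul_ne_zero (by positivity) e3), div_add_div _ _ (by simp [*]) (mul_ne_zero (by positivity) e5), div_eq_div_iff (by simp [*]) (by simp [*])]; ring)

lemma integral_mix {α : Type*} [MeasurableSpace α] [Fintype α] [MeasurableSingletonClass α]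
    (a b c : ℝ) (ha : 0 ≤ a) (hb : 0 ≤ b) (hc : 0 ≤ c)
    (μ ν ξ : Measure α) [IsFiniteMeasure μ] [IsFiniteMeasure ν] [IsFiniteMeasure ξ]
    (f : α → ℝ) :
    ∫ x, f x ∂(ENNReal.ofReal a • μ + ENNReal.ofReal b • ν + ENNReal.ofReal c • ξ)
      = a * ∫ x, f x ∂μ + b * ∫ x, f x ∂ν + c * ∫ x, f x ∂ξ := by
  have hsm : ∀ (t : ℝ) (ρ : Measure α), IsFiniteMeasure ρ →
      IsFiniteMeasure (ENNReal.ofReal t • ρ) := by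
    intro t ρ hρ
    constructor
    rw [Measure.smul_apply, smul_eq_mul]
    exact ENNReal.mul_lt_top ENNReal.ofReal_lt_top (measure_lt_top _ _)
  haveI h1 : IsFiniteMeasure (ENNReal.ofReal a • μ) := hsm a μ ‹_›
  haveI h2 : IsFiniteMeasure (ENNReal.ofReal b • ν) := hsm b ν ‹_›
  haveI h3 : IsFiniteMeasure (ENNReal.ofReal c • ξ) := hsm c ξ ‹_›
  haveI : IsFiniteMeasure (ENNReal.ofReal a • μ + ENNReal.ofReal b • ν) := MeasureTheory.isFiniteMeasureAdd
  rw [integral_add_measure (Integrable.of_finite (μ := ENNReal.ofReal a • μ + ENNReal.ofReal b • ν))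
      (Integrable.of_finite (μ := ENNReal.ofReal c • ξ)),
    integral_add_measure (Integrable.of_finite (μ := ENNReal.ofReal a • μ))
      (Integrable.of_finite (μ := ENNReal.ofReal b • ν)),
    integral_smul_measure, integral_smul_measure, integral_smul_measure,
    ENNReal.toReal_ofReal ha, ENNReal.toReal_ofReal hb, ENNReal.toReal_ofReal hc]
  simp only [smul_eq_mul]

end Stmt6Aux

open Stmt6Aux in
/-- for every sufficiently large `k` there are distributions `D₀, D₁` on
`{0,1}^k` such that `D₀` is almost entirely supported on the all-zeros point, `D₁` gives the
all-zeros point probability at most `1/√k`, and the two distributions have matching moments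
up to degree 4. -/
theorem stmt_6 :
    ∃ k₀ : ℕ, ∀ k : ℕ, k₀ ≤ k →
      ∃ D₀ D₁ : Measure (Fin k → Bool),
        IsProbabilityMeasure D₀ ∧ IsProbabilityMeasure D₁ ∧
        1 - 2 / Real.sqrt k ≤ (D₀ {x | ∀ i, x i = false}).toReal ∧
        (D₁ {x | ∀ i, x i = false}).toReal ≤ 1 / Real.sqrt k ∧
        ∀ S : Multiset (Fin k), Multiset.card S ≤ 4 →
          ∫ x, (S.map fun i => bval (x i)).prod ∂D₀ =
            ∫ x, (S.map fun i => bval (x i)).prod ∂D₁ := by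
  refine ⟨2560000, fun k hk => ?_⟩
  have hk1 : (2560000 : ℝ) ≤ (k : ℝ) := by exact_mod_cast hk
  set sk := Real.sqrt k with hskdef
  have hsk : 0 < sk := Real.sqrt_pos.mpr (by linarith)
  have hsk2 : sk ^ 2 = (k : ℝ) := Real.sq_sqrt (by linarith)
  have hsk1600 : 1600 ≤ sk := by
    rw [hskdef, show (1600:ℝ) = Real.sqrt (1600^2) by rw [Real.sqrt_sq]; norm_num]
    exact Real.sqrt_le_sqrt (by norm_num; linarith)
  obtain ⟨ssk, hsskdef⟩ : ∃ x : ℝ, x = Real.sqrt sk := ⟨_, rfl⟩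
  have hssk : 0 < ssk := hsskdef ▸ Real.sqrt_pos.mpr hsk
  have hssk2 : ssk ^ 2 = sk := hsskdef ▸ Real.sq_sqrt hsk.le
  have hssk40 : 40 ≤ ssk := by
    rw [hsskdef, show (40:ℝ) = Real.sqrt (40^2) by rw [Real.sqrt_sq]; norm_num]
    exact Real.sqrt_le_sqrt (by norm_num; linarith)
  obtain ⟨u, hudef⟩ : ∃ x : ℝ, x = ssk⁻¹ := ⟨_, rfl⟩
  have hu : 0 < u := hudef ▸ inv_pos.mpr hssk
  have hu2 : u ^ 2 * sk = 1 := by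
    rw [hudef, ← hssk2]; field_simp
  have hu40 : u ≤ 1 / 40 := by
    rw [hudef, inv_le_comm₀ (by positivity) (by norm_num)]
    simpa using hssk40
  have hu1 : u ≤ 1 := by linarith
  have huk : u ^ 4 * (k : ℝ) = 1 := by
    have : u ^ 4 * (k:ℝ) = (u^2 * sk)^2 := by rw [← hsk2]; ring
    rw [this, hu2]; norm_num
  obtain ⟨g, hgdef⟩ : ∃ x : ℝ, x = 2 * u ^ 3 := ⟨_, rfl⟩
  obtain ⟨G, hGdef⟩ : ∃ x : ℝ, x = 10 * u := ⟨_, rfl⟩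
  have hg : 0 < g := by rw [hgdef]; positivity
  have hG : 0 < G := by rw [hGdef]; positivity
  have hu3 : u ^ 3 ≤ u := by
    have := pow_le_pow_of_le_one hu.le hu1 (show 1 ≤ 3 by norm_num)
    simpa using this
  have hgG : g < G := by rw [hgdef, hGdef]; linarith
  have hG4 : 4 * G ≤ 1 := by rw [hGdef]; linarith
  -- the six unnormalized weights
  obtain ⟨h0, hh0⟩ : ∃ x : ℝ, x = (24*g*G^4)⁻¹ := ⟨_, rfl⟩
  obtain ⟨h1, hh1⟩ : ∃ x : ℝ, x = (g*(G-g)*(2*G-g)*(3*G-g)*(4*G-g))⁻¹ := ⟨_, rfl⟩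
  obtain ⟨h2, hh2⟩ : ∃ x : ℝ, x = (6*G^4*(G-g))⁻¹ := ⟨_, rfl⟩
  obtain ⟨h3, hh3⟩ : ∃ x : ℝ, x = (4*G^4*(2*G-g))⁻¹ := ⟨_, rfl⟩
  obtain ⟨h4, hh4⟩ : ∃ x : ℝ, x = (6*G^4*(3*G-g))⁻¹ := ⟨_, rfl⟩
  obtain ⟨h5, hh5⟩ : ∃ x : ℝ, x = (24*G^4*(4*G-g))⁻¹ := ⟨_, rfl⟩
  have hp0 : 0 < h0 := by rw [hh0]; positivity
  have hp1 : 0 < h1 := by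
    rw [hh1]
    refine inv_pos.mpr ?_
    apply mul_pos; apply mul_pos; apply mul_pos; apply mul_pos hg
    all_goals linarith
  have hp2 : 0 < h2 := by
    rw [hh2]; exact inv_pos.mpr (mul_pos (by positivity) (by linarith))
  have hp3 : 0 < h3 := by
    rw [hh3]; exact inv_pos.mpr (mul_pos (by positivity) (by linarith))
  have hp4 : 0 < h4 := by
    rw [hh4]; exact inv_pos.mpr (mul_pos (by positivity) (by linarith))
  have hp5 : 0 < h5 := by
    rw [hh5]; exact inv_pos.mpr (mul_pos (by positivity) (by linarith))
  obtain ⟨T, hTdef⟩ : ∃ x : ℝ, x = h0 + h2 + h4 := ⟨_, rfl⟩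
  have hT : 0 < T := by rw [hTdef]; linarith
  -- total masses agree (degree-0 moment identity)
  have hsum : h0 + h2 + h4 = h1 + h3 + h5 := by
    have := moment_id g G hg hgG 0 (by norm_num)
    rw [← hh0, ← hh1, ← hh2, ← hh3, ← hh4, ← hh5] at this
    simpa using this
  -- p-parameters are in [0,1]
  have hrg : 0 ≤ g ∧ g ≤ 1 := ⟨hg.le, by linarith⟩
  have hrG : 0 ≤ G ∧ G ≤ 1 := ⟨hG.le, by linarith⟩
  have hr2G : 0 ≤ 2*G ∧ 2*G ≤ 1 := ⟨by linarith, by linarith⟩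
  have hr3G : 0 ≤ 3*G ∧ 3*G ≤ 1 := ⟨by linarith, by linarith⟩
  have hr4G : 0 ≤ 4*G ∧ 4*G ≤ 1 := ⟨by linarith, by linarith⟩
  haveI i0 : IsProbabilityMeasure (pber k 0) := pber_isProb le_rfl zero_le_one k
  haveI ig : IsProbabilityMeasure (pber k g) := pber_isProb hrg.1 hrg.2 k
  haveI iG : IsProbabilityMeasure (pber k G) := pber_isProb hrG.1 hrG.2 k
  haveI i2G : IsProbabilityMeasure (pber k (2*G)) := pber_isProb hr2G.1 hr2G.2 k
  haveI i3G : IsProbabilityMeasure (pber k (3*G)) := pber_isProb hr3G.1 hr3G.2 k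
  haveI i4G : IsProbabilityMeasure (pber k (4*G)) := pber_isProb hr4G.1 hr4G.2 k
  -- normalized weights
  obtain ⟨w0, hw0⟩ : ∃ x : ℝ, x = h0 / T := ⟨_, rfl⟩
  obtain ⟨w1, hw1⟩ : ∃ x : ℝ, x = h1 / T := ⟨_, rfl⟩
  obtain ⟨w2, hw2⟩ : ∃ x : ℝ, x = h2 / T := ⟨_, rfl⟩
  obtain ⟨w3, hw3⟩ : ∃ x : ℝ, x = h3 / T := ⟨_, rfl⟩
  obtain ⟨w4, hw4⟩ : ∃ x : ℝ, x = h4 / T := ⟨_, rfl⟩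
  obtain ⟨w5, hw5⟩ : ∃ x : ℝ, x = h5 / T := ⟨_, rfl⟩
  have hwn0 : 0 ≤ w0 := by rw [hw0]; exact (div_pos hp0 hT).le
  have hwn1 : 0 ≤ w1 := by rw [hw1]; exact (div_pos hp1 hT).le
  have hwn2 : 0 ≤ w2 := by rw [hw2]; exact (div_pos hp2 hT).le
  have hwn3 : 0 ≤ w3 := by rw [hw3]; exact (div_pos hp3 hT).le
  have hwn4 : 0 ≤ w4 := by rw [hw4]; exact (div_pos hp4 hT).le
  have hwn5 : 0 ≤ w5 := by rw [hw5]; exact (div_pos hp5 hT).le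
  have hwsum0 : w0 + w2 + w4 = 1 := by
    rw [hw0, hw2, hw4, ← add_div, ← add_div, ← hTdef, div_self hT.ne']
  have hwsum1 : w1 + w3 + w5 = 1 := by
    rw [hw1, hw3, hw5, ← add_div, ← add_div, ← hsum, ← hTdef, div_self hT.ne']
  have happly : ∀ (a b c : ℝ) (μ ν ξ : Measure (Fin k → Bool)) (A : Set (Fin k → Bool)),
      (ENNReal.ofReal a • μ + ENNReal.ofReal b • ν + ENNReal.ofReal c • ξ) A
        = ENNReal.ofReal a * μ A + ENNReal.ofReal b * ν A + ENNReal.ofReal c * ξ A := by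
    intro a b c μ ν ξ A
    simp [Measure.add_apply, Measure.smul_apply, smul_eq_mul]
  have hprob : ∀ (a b c : ℝ), 0 ≤ a → 0 ≤ b → 0 ≤ c → a + b + c = 1 →
      ∀ (μ ν ξ : Measure (Fin k → Bool)), IsProbabilityMeasure μ → IsProbabilityMeasure ν →
      IsProbabilityMeasure ξ →
      IsProbabilityMeasure (ENNReal.ofReal a • μ + ENNReal.ofReal b • ν + ENNReal.ofReal c • ξ) := by
    intro a b c ha hb hc habc μ ν ξ hμ hν hξ
    constructor
    rw [happly, hμ.measure_univ, hν.measure_univ, hξ.measure_univ, mul_one, mul_one, mul_one,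
      ← ENNReal.ofReal_add ha hb, ← ENNReal.ofReal_add (by linarith) hc, habc]
    simp
  -- the all-zero set measure, in real terms
  have hzero : ∀ (a b c p q r : ℝ), 0 ≤ a → 0 ≤ b → 0 ≤ c →
      0 ≤ p → p ≤ 1 → 0 ≤ q → q ≤ 1 → 0 ≤ r → r ≤ 1 →
      ((ENNReal.ofReal a • pber k p + ENNReal.ofReal b • pber k q
        + ENNReal.ofReal c • pber k r) {x | ∀ i, x i = false}).toReal
        = a * (1-p)^k + b * (1-q)^k + c * (1-r)^k := by
    intro a b c p q r ha hb hc hpa hpb hqa hqb hra hrb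
    rw [happly, pber_zero hpa hpb k, pber_zero hqa hqb k, pber_zero hra hrb k,
      ← ENNReal.ofReal_pow (by linarith), ← ENNReal.ofReal_pow (by linarith),
      ← ENNReal.ofReal_pow (by linarith),
      ← ENNReal.ofReal_mul ha, ← ENNReal.ofReal_mul hb, ← ENNReal.ofReal_mul hc]
    have na : 0 ≤ a * (1-p)^k := mul_nonneg ha (pow_nonneg (by linarith) k)
    have nb : 0 ≤ b * (1-q)^k := mul_nonneg hb (pow_nonneg (by linarith) k)
    have nc : 0 ≤ c * (1-r)^k := mul_nonneg hc (pow_nonneg (by linarith) k)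
    rw [← ENNReal.ofReal_add na nb, ← ENNReal.ofReal_add (by linarith) nc,
      ENNReal.toReal_ofReal (by linarith)]
  refine ⟨ENNReal.ofReal w0 • pber k 0 + ENNReal.ofReal w2 • pber k G
      + ENNReal.ofReal w4 • pber k (3*G),
    ENNReal.ofReal w1 • pber k g + ENNReal.ofReal w3 • pber k (2*G)
      + ENNReal.ofReal w5 • pber k (4*G),
    hprob w0 w2 w4 hwn0 hwn2 hwn4 hwsum0 _ _ _ i0 iG i3G,
    hprob w1 w3 w5 hwn1 hwn3 hwn5 hwsum1 _ _ _ ig i2G i4G, ?_, ?_, ?_⟩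
  · -- D₀ gives the zero string large probability
    rw [hzero w0 w2 w4 0 G (3*G) hwn0 hwn2 hwn4 le_rfl zero_le_one hrG.1 hrG.2 hr3G.1 hr3G.2]
    have hGg8 : 8 * u ≤ G - g := by rw [hgdef, hGdef]; linarith
    have hu2h0 : u^2 * h0 = (48*u*G^4)⁻¹ := by
      rw [hh0, hgdef]
      rw [show (24:ℝ)*(2*u^3)*G^4 = 48*u*G^4 * u^2 by ring, mul_inv]
      rw [show (u^2)⁻¹ = (u⁻¹)^2 by rw [inv_pow]]
      field_simp
    have e2 : h2 ≤ u^2 * h0 := by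
      rw [hh2, hu2h0]
      apply inv_anti₀ (by positivity)
      calc 48*u*G^4 = 6*G^4*(8*u) := by ring
        _ ≤ 6*G^4*(G-g) := mul_le_mul_of_nonneg_left hGg8 (by positivity)
    have e4 : h4 ≤ u^2 * h0 := by
      rw [hh4, hu2h0]
      apply inv_anti₀ (by positivity)
      calc 48*u*G^4 = 6*G^4*(8*u) := by ring
        _ ≤ 6*G^4*(3*G-g) := mul_le_mul_of_nonneg_left (by linarith) (by positivity)
    have hw24 : w2 + w4 ≤ 2 / sk := by
      have hA : w2 + w4 ≤ 2 * u^2 * (h0 / T) := by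
        rw [hw2, hw4, ← add_div, div_le_iff₀ hT]
        calc h2 + h4 ≤ 2*u^2*h0 := by linarith
          _ = 2 * u ^ 2 * (h0 / T) * T := by field_simp
      have hB : h0 / T ≤ 1 := by rw [div_le_one hT, hTdef]; linarith
      have hC : 2 * u^2 = 2 / sk := by rw [eq_div_iff hsk.ne']; linarith [hu2]
      have hD : 2 * u^2 * (h0/T) ≤ 2 * u^2 := by
        have := mul_le_mul_of_nonneg_left hB (show (0:ℝ) ≤ 2*u^2 by positivity)
        linarith
      linarith [hC ▸ hD, hA]
    have hpw2 : (0:ℝ) ≤ (1-G)^k := pow_nonneg (by linarith) k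
    have hpw4 : (0:ℝ) ≤ (1-(3*G))^k := pow_nonneg (by linarith) k
    have hterm : 0 ≤ w2 * (1-G)^k + w4 * (1-3*G)^k := by
      have := mul_nonneg hwn2 hpw2
      have := mul_nonneg hwn4 hpw4
      linarith
    have hone : w0 * (1-(0:ℝ))^k = w0 := by norm_num
    calc 1 - 2/sk ≤ w0 := by linarith [hwsum0]
      _ ≤ w0 * (1-(0:ℝ))^k + (w2 * (1-G)^k + w4 * (1-3*G)^k) := by rw [hone]; linarith
      _ = w0 * (1-(0:ℝ))^k + w2 * (1-G)^k + w4 * (1-3*G)^k := by ring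
  · -- D₁ gives the zero string small probability
    rw [hzero w1 w3 w5 g (2*G) (4*G) hwn1 hwn3 hwn5 hrg.1 hrg.2 hr2G.1 hr2G.2 hr4G.1 hr4G.2]
    have hb1 : (1-(2*G))^k ≤ (1-g)^k := pow_le_pow_left₀ (by linarith) (by linarith) k
    have hb2 : (1-(4*G))^k ≤ (1-g)^k := pow_le_pow_left₀ (by linarith) (by linarith) k
    have hcollect : w1 * (1-g)^k + w3 * (1-2*G)^k + w5 * (1-4*G)^k ≤ (1-g)^k := by
      have t3 := mul_le_mul_of_nonneg_left hb1 hwn3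
      have t5 := mul_le_mul_of_nonneg_left hb2 hwn5
      calc w1 * (1-g)^k + w3 * (1-2*G)^k + w5 * (1-4*G)^k
          ≤ w1 * (1-g)^k + w3 * (1-g)^k + w5 * (1-g)^k := by
            linarith
        _ = (w1 + w3 + w5) * (1-g)^k := by ring
        _ = (1-g)^k := by rw [hwsum1, one_mul]
    have hexp : (1-g)^k ≤ 1 / sk := by
      have s1 : (1-g)^k ≤ Real.exp (-g) ^ k :=
        pow_le_pow_left₀ (by linarith) (by linarith [Real.add_one_le_exp (-g)]) k
      have s2 : Real.exp (-g) ^ k = Real.exp (-(g * k)) := by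
        rw [← Real.exp_nat_mul]; ring_nf
      have hkne : (k:ℝ) ≠ 0 := by positivity
      have hgk : g * (k:ℝ) = 2 / u := by
        rw [hgdef, eq_div_iff hu.ne']
        linear_combination 2 * huk
      have s3 : sk ≤ Real.exp (g * k) := by
        rw [hgk, show (2:ℝ)/u = (1/u) + (1/u) by ring, Real.exp_add]
        have he : 1/u ≤ Real.exp (1/u) := by
          have := Real.add_one_le_exp (1/u); linarith
        have hue : (0:ℝ) ≤ 1/u := by positivity
        calc sk = (1/u) * (1/u) := by
              rw [div_mul_div_comm, one_mul, eq_div_iff (by positivity)]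
              linear_combination hu2
          _ ≤ Real.exp (1/u) * Real.exp (1/u) :=
              mul_le_mul he he hue (Real.exp_nonneg _)
      have s4 : Real.exp (-(g*(k:ℝ))) ≤ 1/sk := by
        rw [Real.exp_neg, inv_le_comm₀ (Real.exp_pos _) (by positivity)]
        simpa using s3
      calc (1-g)^k ≤ Real.exp (-g) ^ k := s1
        _ = Real.exp (-(g*(k:ℝ))) := s2
        _ ≤ 1/sk := s4
    linarith
  · -- moments match
    intro S hS
    have hd : S.toFinset.card ≤ 4 := le_trans (Multiset.toFinset_card_le S) hS
    rw [integral_mix w0 w2 w4 hwn0 hwn2 hwn4 _ _ _ _,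
      integral_mix w1 w3 w5 hwn1 hwn3 hwn5 _ _ _ _,
      pber_moment le_rfl zero_le_one k S, pber_moment hrG.1 hrG.2 k S,
      pber_moment hr3G.1 hr3G.2 k S, pber_moment hrg.1 hrg.2 k S,
      pber_moment hr2G.1 hr2G.2 k S, pber_moment hr4G.1 hr4G.2 k S]
    have hm := moment_id g G hg hgG S.toFinset.card hd
    rw [← hh0, ← hh1, ← hh2, ← hh3, ← hh4, ← hh5] at hm
    rw [hw0, hw2, hw4, hw1, hw3, hw5]
    field_simp
    linear_combination hm
end
end

section
/- Let P_0 and P_1 be probability distributions on {0,1}^k with matching moments up to degree d, and let γ ∈ [0,1]. Then the γ-noisy versions P̃_0 and P̃_1 of P_0 and P_1 also have matching moments up to degree d. -/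
open MeasureTheory
open scoped ENNReal

noncomputable section

/-- The distribution of a biased coin on `Bool` with probability `p` of `true`. -/
def coin (p : ℝ) : Measure Bool :=
  (PMF.bernoulli (min (Real.toNNReal p) 1) (min_le_right _ _)).toMeasure

/-- The `γ`-noisy version of a distribution `μ` on the hypercube: sample `x ~ μ`, then
independently for each coordinate, with probability `γ` replace it by a uniform random bit. -/
def noisy {ι : Type*} [Fintype ι] (γ : ℝ) (μ : Measure (ι → Bool)) :
    Measure (ι → Bool) :=
  Measure.map
    (fun p : (ι → Bool) × ((ι → Bool) × (ι → Bool)) => fun i =>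
      if p.2.1 i then p.2.2 i else p.1 i)
    (μ.prod ((Measure.pi fun _ : ι => coin γ).prod (Measure.pi fun _ : ι => coin (1 / 2))))

instance coin_prob (p : ℝ) : IsProbabilityMeasure (coin p) :=
  PMF.toMeasure.isProbabilityMeasure _

lemma bval_pow (b : Bool) {n : ℕ} (hn : n ≠ 0) : bval b ^ n = bval b := by
  cases b <;> simp [bval, zero_pow hn]

lemma integral_coin (p : ℝ) (hp0 : 0 ≤ p) (hp1 : p ≤ 1) (f : Bool → ℝ) :
    ∫ b, f b ∂(coin p) = p * f true + (1 - p) * f false := by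
  have hmin : min (Real.toNNReal p) 1 = Real.toNNReal p :=
    min_eq_left (Real.toNNReal_le_one.mpr hp1)
  have ht : (coin p {true}).toReal = p := by
    rw [coin, PMF.toMeasure_apply_singleton _ _ (measurableSet_singleton _),
      PMF.bernoulli_apply, hmin]
    simp [Real.coe_toNNReal _ hp0]
  have hf : (coin p {false}).toReal = 1 - p := by
    rw [coin, PMF.toMeasure_apply_singleton _ _ (measurableSet_singleton _),
      PMF.bernoulli_apply, hmin]
    simp only [Bool.cond_false]
    rw [ENNReal.coe_toReal, NNReal.coe_sub (Real.toNNReal_le_one.mpr hp1)]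
    simp [Real.coe_toNNReal _ hp0]
  rw [integral_fintype Integrable.of_finite]
  simp [Fintype.sum_bool, Measure.real, ht, hf, smul_eq_mul]


lemma integral_pi_prod {ι : Type*} [Fintype ι] (m : Measure Bool) [IsProbabilityMeasure m]
    (f : ι → Bool → ℝ) :
    ∫ x, ∏ i, f i (x i) ∂(Measure.pi fun _ : ι => m) = ∏ i, ∫ b, f i b ∂m := by
  letI : MeasureSpace Bool := ⟨m⟩
  exact MeasureTheory.integral_fintype_prod_eq_prod f

lemma bool_univ : ({false, true} : Set Bool) = Set.univ := by
  ext c; cases c <;> simp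

lemma noisy_prod_integral (k : ℕ) (γ : ℝ) (hγ0 : 0 ≤ γ) (hγ1 : γ ≤ 1)
    (μ : Measure (Fin k → Bool)) [IsProbabilityMeasure μ] (T : Finset (Fin k)) :
    ∫ y, ∏ i ∈ T, bval (y i) ∂(noisy γ μ)
      = ∑ U ∈ T.powerset,
          ((1 - γ) ^ U.card * (γ / 2) ^ (T.card - U.card)) * ∫ x, ∏ i ∈ U, bval (x i) ∂μ := by
  rw [noisy, integral_map (measurable_of_countable _).aemeasurable
    (measurable_of_countable _).aestronglyMeasurable]
  rw [MeasureTheory.integral_prod _ Integrable.of_finite]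
  have inner : ∀ x : Fin k → Bool,
      (∫ q : (Fin k → Bool) × (Fin k → Bool),
        ∏ i ∈ T, bval (if q.1 i then q.2 i else x i)
        ∂((Measure.pi fun _ : Fin k => coin γ).prod (Measure.pi fun _ : Fin k => coin (1/2))))
      = ∏ i ∈ T, ((1 - γ) * bval (x i) + γ / 2) := by
    intro x
    rw [MeasureTheory.integral_prod _ Integrable.of_finite]
    have step1 : ∀ b : Fin k → Bool,
        (∫ u, ∏ i ∈ T, bval (if b i then u i else x i) ∂(Measure.pi fun _ : Fin k => coin (1/2)))
        = ∏ i, (if i ∈ T then (if b i then (1/2 : ℝ) else bval (x i)) else 1) := by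
      intro b
      have : ∀ u : Fin k → Bool, ∏ i ∈ T, bval (if b i then u i else x i)
          = ∏ i, (if i ∈ T then bval (if b i then u i else x i) else 1) := by
        intro u
        rw [Finset.prod_ite_mem, Finset.univ_inter]
      simp_rw [this]
      rw [integral_pi_prod (coin (1/2))
        (fun i υ => if i ∈ T then bval (if b i then υ else x i) else 1)]
      refine Finset.prod_congr rfl fun i _ => ?_
      by_cases hi : i ∈ T
      · simp only [hi, if_true]
        by_cases hb : b i
        · simp only [hb, if_true]
          rw [integral_coin _ (by norm_num) (by norm_num)]
          simp [bval]
        · simp only [hb, Bool.false_eq_true, if_false]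
          rw [integral_const, probReal_univ]
          simp
      · simp only [hi, if_false]
        rw [integral_const, probReal_univ]
        simp
    simp_rw [step1]
    rw [integral_pi_prod (coin γ)
      (fun i β => if i ∈ T then (if β then (1/2 : ℝ) else bval (x i)) else 1)]
    have step2 : ∀ i : Fin k,
        (∫ β, (if i ∈ T then (if β then (1/2 : ℝ) else bval (x i)) else 1) ∂(coin γ))
        = (if i ∈ T then (1 - γ) * bval (x i) + γ / 2 else 1) := by
      intro i
      rw [integral_coin _ hγ0 hγ1]
      by_cases hi : i ∈ T
      · simp only [hi, if_true]
        norm_num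
        ring
      · simp only [hi, if_false]
        norm_num
    simp_rw [step2]
    rw [Finset.prod_ite_mem, Finset.univ_inter]
  simp_rw [inner]
  have expand : ∀ x : Fin k → Bool,
      ∏ i ∈ T, ((1 - γ) * bval (x i) + γ / 2)
      = ∑ U ∈ T.powerset,
          ((1 - γ) ^ U.card * (γ / 2) ^ (T.card - U.card)) * ∏ i ∈ U, bval (x i) := by
    intro x
    rw [Finset.prod_add]
    refine Finset.sum_congr rfl fun U hU => ?_
    rw [Finset.prod_mul_distrib, Finset.prod_const, Finset.prod_const,
      Finset.card_sdiff_of_subset (Finset.mem_powerset.mp hU)]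
    ring
  simp_rw [expand]
  rw [integral_finset_sum _ fun U _ => Integrable.of_finite]
  exact Finset.sum_congr rfl fun U _ => by rw [integral_const_mul]

/-- if `P₀` and `P₁` on `{0,1}^k` have matching moments up to degree `d`, then
so do their `γ`-noisy versions. -/
theorem stmt_7 (k d : ℕ) (γ : ℝ) (hγ0 : 0 ≤ γ) (hγ1 : γ ≤ 1)
    (P₀ P₁ : Measure (Fin k → Bool)) [IsProbabilityMeasure P₀] [IsProbabilityMeasure P₁]
    (hmom : ∀ S : Multiset (Fin k), Multiset.card S ≤ d →
      ∫ x, (S.map fun i => bval (x i)).prod ∂P₀ =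
        ∫ x, (S.map fun i => bval (x i)).prod ∂P₁) :
    ∀ S : Multiset (Fin k), Multiset.card S ≤ d →
      ∫ y, (S.map fun i => bval (y i)).prod ∂(noisy γ P₀) =
        ∫ y, (S.map fun i => bval (y i)).prod ∂(noisy γ P₁) := by
  intro S hS
  have key : ∀ y : Fin k → Bool,
      (S.map fun i => bval (y i)).prod = ∏ i ∈ S.toFinset, bval (y i) := by
    intro y
    rw [Finset.prod_multiset_map_count]
    exact Finset.prod_congr rfl fun i hi =>
      bval_pow _ (by simpa [Multiset.count_eq_zero] using Multiset.mem_toFinset.mp hi)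
  simp_rw [key]
  rw [noisy_prod_integral k γ hγ0 hγ1 P₀, noisy_prod_integral k γ hγ0 hγ1 P₁]
  refine Finset.sum_congr rfl fun U hU => ?_
  congr 1
  have hcard : Multiset.card U.val ≤ d := by
    have h1 : U.card ≤ S.toFinset.card := Finset.card_le_card (Finset.mem_powerset.mp hU)
    exact le_trans (le_trans h1 S.toFinset_card_le) hS
  exact hmom U.val hcard
end
end

section
/- Let 0 < τ ≤ 1, d ≥ 1, and let l ∈ ℝ^M be a τ-regular vector. Let π : [M] → [N] be a map with |π^{−1}(i)| ≤ d for every i ∈ [N], and suppose that for every i ∈ [N] there is at most one j ∈ π^{−1}(i) with |l^{(j)}|² ≥ ‖l‖₂²/d⁸. Then Σ_{i∈[N]} ( Σ_{j∈π^{−1}(i)} |l^{(j)}| )⁴ ≤ (τ² + 4τ/d) · ‖l‖₂⁴; in particular this is at most 2τ·‖l‖₂⁴. -/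
set_option maxHeartbeats 2000000

noncomputable section

/-- for a `τ`-regular vector `l` and a projection `π` with fibers of size at
most `d`, each fiber containing at most one "big" coordinate, the fourth moment of the
fiber-wise ℓ₁ masses is at most `(τ² + 4τ/d)·‖l‖₂⁴`, and in particular at most `2τ·‖l‖₂⁴`. -/
theorem stmt_13 (M N d : ℕ) (hd : 1 ≤ d) (τ : ℝ) (hτ0 : 0 < τ) (hτ1 : τ ≤ 1)
    (l : Fin M → ℝ)
    (hreg : ∀ j, |l j| ≤ τ * Real.sqrt (∑ r, (l r) ^ 2))
    (π : Fin M → Fin N)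
    (hfiber : ∀ i : Fin N, (Finset.univ.filter fun j => π j = i).card ≤ d)
    (hbig : ∀ i : Fin N, ∀ j₁ j₂ : Fin M, π j₁ = i → π j₂ = i →
      (∑ r, (l r) ^ 2) / (d : ℝ) ^ 8 ≤ (l j₁) ^ 2 →
      (∑ r, (l r) ^ 2) / (d : ℝ) ^ 8 ≤ (l j₂) ^ 2 → j₁ = j₂) :
    (∑ i : Fin N, (∑ j ∈ Finset.univ.filter fun j => π j = i, |l j|) ^ 4
        ≤ (τ ^ 2 + 4 * τ / d) * Real.sqrt (∑ r, (l r) ^ 2) ^ 4) ∧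
      ∑ i : Fin N, (∑ j ∈ Finset.univ.filter fun j => π j = i, |l j|) ^ 4
        ≤ 2 * τ * Real.sqrt (∑ r, (l r) ^ 2) ^ 4 := by
  classical
  set S : ℝ := ∑ r, (l r) ^ 2 with hSdef
  have hS0 : 0 ≤ S := Finset.sum_nonneg fun _ _ => sq_nonneg _
  set s : ℝ := Real.sqrt S with hsdef
  have hs0 : 0 ≤ s := Real.sqrt_nonneg _
  have hs2 : s ^ 2 = S := Real.sq_sqrt hS0
  set e : ℝ := (d : ℝ) with hedef
  have he1 : (1:ℝ) ≤ e := by rw [hedef]; exact_mod_cast hd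
  have he0 : (0:ℝ) < e := lt_of_lt_of_le zero_lt_one he1
  have hx0 : (0:ℝ) ≤ e - 1 := by linarith
  set m : ℝ := min (τ * s) (s / e ^ 4) with hmdef
  have hm0 : 0 ≤ m := le_min (by positivity) (by positivity)
  have hm1 : m ≤ τ * s := min_le_left _ _
  have hm2 : m ≤ s / e ^ 4 := min_le_right _ _
  have hmsq : m ^ 2 ≤ τ * s ^ 2 / e ^ 4 := by
    have h := mul_le_mul hm1 hm2 hm0 (by positivity)
    calc m ^ 2 = m * m := sq m
      _ ≤ (τ * s) * (s / e ^ 4) := h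
      _ = τ * s ^ 2 / e ^ 4 := by ring
  -- small coordinates are bounded by m
  have hsmall : ∀ j : Fin M, ¬ (S / e ^ 8 ≤ (l j) ^ 2) → |l j| ≤ m := by
    intro j hj
    refine le_min (hreg j) ?_
    have h1 : (l j) ^ 2 ≤ S / e ^ 8 := (not_le.mp hj).le
    have h2 : Real.sqrt ((l j) ^ 2) ≤ Real.sqrt (S / e ^ 8) := Real.sqrt_le_sqrt h1
    rw [Real.sqrt_sq_eq_abs] at h2
    have h3 : Real.sqrt (S / e ^ 8) = s / e ^ 4 := by
      rw [Real.sqrt_div hS0]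
      congr 1
      rw [show e ^ 8 = (e ^ 4) ^ 2 by ring]
      exact Real.sqrt_sq (by positivity)
    rw [h3] at h2
    exact h2
  -- the big/small fibers
  set P : Fin M → Prop := fun j => S / e ^ 8 ≤ (l j) ^ 2 with hPdef
  set fb : Fin N → Finset (Fin M) :=
    fun i => (Finset.univ.filter fun j => π j = i).filter (fun j => P j) with hfbdef
  set fs : Fin N → Finset (Fin M) :=
    fun i => (Finset.univ.filter fun j => π j = i).filter (fun j => ¬ P j) with hfsdef
  set B : Fin N → ℝ := fun i => ∑ j ∈ fb i, |l j| with hBdef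
  set T : Fin N → ℝ := fun i => ∑ j ∈ fs i, |l j| with hTdef
  set Qb : Fin N → ℝ := fun i => ∑ j ∈ fb i, (l j) ^ 2 with hQbdef
  set Qs : Fin N → ℝ := fun i => ∑ j ∈ fs i, (l j) ^ 2 with hQsdef
  have hsplit : ∀ i, (∑ j ∈ Finset.univ.filter fun j => π j = i, |l j|) = B i + T i := by
    intro i
    exact (Finset.sum_filter_add_sum_filter_not _ _ _).symm
  have hcb : ∀ i, (fb i).card ≤ 1 := by
    intro i
    apply Finset.card_le_one.mpr
    intro a ha b hb
    simp only [hfbdef, Finset.mem_filter, Finset.mem_univ, true_and] at ha hb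
    exact hbig i a b ha.1 hb.1 ha.2 hb.2
  have hcard : ∀ i, (fb i).card + (fs i).card ≤ d := by
    intro i
    rw [hfbdef, hfsdef]
    simp only []
    rw [Finset.card_filter_add_card_filter_not]
    exact hfiber i
  have hB0 : ∀ i, 0 ≤ B i := fun i => Finset.sum_nonneg fun _ _ => abs_nonneg _
  have hT0 : ∀ i, 0 ≤ T i := fun i => Finset.sum_nonneg fun _ _ => abs_nonneg _
  have hQb0 : ∀ i, 0 ≤ Qb i := fun i => Finset.sum_nonneg fun _ _ => sq_nonneg _
  have hQs0 : ∀ i, 0 ≤ Qs i := fun i => Finset.sum_nonneg fun _ _ => sq_nonneg _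
  have hBs : ∀ i, B i ≤ τ * s := by
    intro i
    calc B i ≤ (fb i).card • (τ * s) :=
          Finset.sum_le_card_nsmul _ _ _ (fun j _ => hreg j)
      _ = ((fb i).card : ℝ) * (τ * s) := nsmul_eq_mul _ _
      _ ≤ 1 * (τ * s) := by
          apply mul_le_mul_of_nonneg_right _ (by positivity)
          exact_mod_cast hcb i
      _ = τ * s := one_mul _
  have hB2 : ∀ i, (B i) ^ 2 ≤ Qb i := by
    intro i
    have h := sq_sum_le_card_mul_sum_sq (s := fb i) (f := fun j => |l j|)
    simp only [sq_abs] at h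
    calc (B i) ^ 2 ≤ ((fb i).card : ℝ) * Qb i := h
      _ ≤ 1 * Qb i := by
          apply mul_le_mul_of_nonneg_right _ (hQb0 i)
          exact_mod_cast hcb i
      _ = Qb i := one_mul _
  have hTm : ∀ i, T i ≤ ((fs i).card : ℝ) * m := by
    intro i
    calc T i ≤ (fs i).card • m := by
          apply Finset.sum_le_card_nsmul
          intro j hj
          simp only [hfsdef, Finset.mem_filter, Finset.mem_univ, true_and] at hj
          exact hsmall j hj.2
      _ = ((fs i).card : ℝ) * m := nsmul_eq_mul _ _
  have hT2 : ∀ i, (T i) ^ 2 ≤ ((fs i).card : ℝ) * Qs i := by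
    intro i
    have h := sq_sum_le_card_mul_sum_sq (s := fs i) (f := fun j => |l j|)
    simp only [sq_abs] at h
    exact h
  -- coefficients
  set cB : ℝ := (4 * (e - 1) + 6 * (e - 1) ^ 2) / e ^ 4 with hcBdef
  set cS : ℝ := (4 * (e - 1) ^ 2 + (e - 1) ^ 3) / e ^ 4 + 1 / e with hcSdef
  set K : ℝ := τ ^ 2 + cB * τ with hKdef
  set K' : ℝ := cS * τ with hK'def
  have hcB0 : 0 ≤ cB := by
    apply div_nonneg _ (by positivity)
    nlinarith [sq_nonneg (e - 1)]
  have hcS0 : 0 ≤ cS := by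
    rw [hcSdef]
    have h1 : (0:ℝ) ≤ (4 * (e - 1) ^ 2 + (e - 1) ^ 3) / e ^ 4 := by
      apply div_nonneg _ (by positivity)
      nlinarith [sq_nonneg (e - 1), pow_nonneg hx0 3]
    have h2 : (0:ℝ) ≤ 1 / e := by positivity
    linarith
  -- the per-fiber key estimate
  have key : ∀ i, (B i + T i) ^ 4 ≤ K * s ^ 2 * Qb i + K' * s ^ 2 * Qs i := by
    intro i
    rcases Nat.le_one_iff_eq_zero_or_eq_one.mp (hcb i) with h0 | h1
    · -- no big coordinate in the fiber
      have hfbe : fb i = ∅ := Finset.card_eq_zero.mp h0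
      have hBi : B i = 0 := by simp [hBdef, hfbe]
      have hQbi : Qb i = 0 := by simp [hQbdef, hfbe]
      have hcs : ((fs i).card : ℝ) ≤ e := by
        rw [hedef]
        have h := hcard i
        have h2 : (fs i).card ≤ d := le_trans (Nat.le_add_left _ _) h
        exact_mod_cast h2
      have h1' : T i ≤ e * m := le_trans (hTm i) (mul_le_mul_of_nonneg_right hcs hm0)
      have h2 : (T i) ^ 2 ≤ e * Qs i :=
        le_trans (hT2 i) (mul_le_mul_of_nonneg_right hcs (hQs0 i))
      have h3 : (T i) ^ 2 ≤ (e * m) ^ 2 := by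
        apply pow_le_pow_left₀ (hT0 i) h1'
      have hK'ge : (1 / e) * τ ≤ K' := by
        rw [hK'def]
        apply mul_le_mul_of_nonneg_right _ hτ0.le
        rw [hcSdef]
        have : 0 ≤ (4 * (e - 1) ^ 2 + (e - 1) ^ 3) / e ^ 4 := by
          apply div_nonneg _ (by positivity)
          nlinarith [sq_nonneg (e - 1), pow_nonneg hx0 3]
        linarith
      calc (B i + T i) ^ 4 = (T i) ^ 2 * (T i) ^ 2 := by rw [hBi]; ring
        _ ≤ (e * m) ^ 2 * (e * Qs i) := mul_le_mul h3 h2 (sq_nonneg _) (by positivity)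
        _ = e ^ 3 * m ^ 2 * Qs i := by ring
        _ ≤ e ^ 3 * (τ * s ^ 2 / e ^ 4) * Qs i := by
            apply mul_le_mul_of_nonneg_right _ (hQs0 i)
            exact mul_le_mul_of_nonneg_left hmsq (by positivity)
        _ = ((1 / e) * τ) * (s ^ 2 * Qs i) := by field_simp
        _ ≤ K' * (s ^ 2 * Qs i) := by
            apply mul_le_mul_of_nonneg_right hK'ge (by positivity)
        _ = K * s ^ 2 * Qb i + K' * s ^ 2 * Qs i := by rw [hQbi]; ring
    · -- exactly one big coordinate
      have hcs : ((fs i).card : ℝ) ≤ e - 1 := by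
        have h := hcard i
        rw [h1] at h
        have : (fs i).card + 1 ≤ d := by omega
        have := (Nat.cast_le (α := ℝ)).mpr this
        push_cast at this
        linarith
      obtain ⟨b, hb⟩ : ∃ b, B i = b := ⟨_, rfl⟩
      obtain ⟨t, ht⟩ : ∃ t, T i = t := ⟨_, rfl⟩
      obtain ⟨qb, hqb⟩ : ∃ qb, Qb i = qb := ⟨_, rfl⟩
      obtain ⟨qs, hqs⟩ : ∃ qs, Qs i = qs := ⟨_, rfl⟩
      rw [hb, ht, hqb, hqs]
      have hB0' : 0 ≤ b := hb ▸ hB0 i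
      have hT0' : 0 ≤ t := ht ▸ hT0 i
      have hQb0' : 0 ≤ qb := hqb ▸ hQb0 i
      have hQs0' : 0 ≤ qs := hqs ▸ hQs0 i
      have ht1 : t ≤ (e - 1) * m := by
        rw [← ht]; exact le_trans (hTm i) (mul_le_mul_of_nonneg_right hcs hm0)
      have ht2b : t ^ 2 ≤ (e - 1) * qs := by
        rw [← ht, ← hqs]; exact le_trans (hT2 i) (mul_le_mul_of_nonneg_right hcs (hQs0 i))
      have ht2a : t ^ 2 ≤ (e - 1) ^ 2 * (τ * s ^ 2 / e ^ 4) := by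
        calc t ^ 2 ≤ ((e - 1) * m) ^ 2 := pow_le_pow_left₀ hT0' ht1 2
          _ = (e - 1) ^ 2 * m ^ 2 := by ring
          _ ≤ (e - 1) ^ 2 * (τ * s ^ 2 / e ^ 4) :=
              mul_le_mul_of_nonneg_left hmsq (by positivity)
      have hbt : b * t ≤ (e - 1) * (τ * s ^ 2 / e ^ 4) := by
        calc b * t ≤ (τ * s) * ((e - 1) * m) :=
              mul_le_mul (hb ▸ hBs i) ht1 hT0' (by positivity)
          _ ≤ (τ * s) * ((e - 1) * (s / e ^ 4)) := by
              apply mul_le_mul_of_nonneg_left _ (by positivity)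
              exact mul_le_mul_of_nonneg_left hm2 hx0
          _ = (e - 1) * (τ * s ^ 2 / e ^ 4) := by ring
      have hb2 : b ^ 2 ≤ qb := by rw [← hb, ← hqb]; exact hB2 i
      have hb2' : b ^ 2 ≤ (τ * s) ^ 2 := pow_le_pow_left₀ hB0' (hb ▸ hBs i) 2
      have hbt0 : 0 ≤ b * t := mul_nonneg hB0' hT0'
      -- the five pieces
      have c1 : b ^ 4 ≤ τ ^ 2 * s ^ 2 * qb := by
        calc b ^ 4 = b ^ 2 * b ^ 2 := by ring
          _ ≤ (τ * s) ^ 2 * qb := mul_le_mul hb2' hb2 (sq_nonneg _) (sq_nonneg _)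
          _ = τ ^ 2 * s ^ 2 * qb := by ring
      have c2 : b ^ 3 * t ≤ qb * ((e - 1) * (τ * s ^ 2 / e ^ 4)) := by
        calc b ^ 3 * t = b ^ 2 * (b * t) := by ring
          _ ≤ qb * ((e - 1) * (τ * s ^ 2 / e ^ 4)) :=
              mul_le_mul hb2 hbt hbt0 hQb0'
      have c3 : b ^ 2 * t ^ 2 ≤ qb * ((e - 1) ^ 2 * (τ * s ^ 2 / e ^ 4)) :=
        mul_le_mul hb2 ht2a (sq_nonneg _) hQb0'
      have c4 : b * t ^ 3 ≤ ((e - 1) * (τ * s ^ 2 / e ^ 4)) * ((e - 1) * qs) := by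
        calc b * t ^ 3 = (b * t) * t ^ 2 := by ring
          _ ≤ ((e - 1) * (τ * s ^ 2 / e ^ 4)) * ((e - 1) * qs) :=
              mul_le_mul hbt ht2b (sq_nonneg _) (by positivity)
      have c5 : t ^ 4 ≤ ((e - 1) ^ 2 * (τ * s ^ 2 / e ^ 4)) * ((e - 1) * qs) := by
        calc t ^ 4 = t ^ 2 * t ^ 2 := by ring
          _ ≤ ((e - 1) ^ 2 * (τ * s ^ 2 / e ^ 4)) * ((e - 1) * qs) :=
              mul_le_mul ht2a ht2b (sq_nonneg _) (by positivity)
      have expand : (b + t) ^ 4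
          = b ^ 4 + 4 * (b ^ 3 * t) + 6 * (b ^ 2 * t ^ 2) + 4 * (b * t ^ 3) + t ^ 4 := by ring
      have hKform : K * s ^ 2 * qb
          = τ ^ 2 * s ^ 2 * qb + 4 * (qb * ((e - 1) * (τ * s ^ 2 / e ^ 4)))
            + 6 * (qb * ((e - 1) ^ 2 * (τ * s ^ 2 / e ^ 4))) := by
        rw [hKdef, hcBdef]; ring
      have hK'form : K' * s ^ 2 * qs
          = 4 * (((e - 1) * (τ * s ^ 2 / e ^ 4)) * ((e - 1) * qs))
            + (((e - 1) ^ 2 * (τ * s ^ 2 / e ^ 4)) * ((e - 1) * qs))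
            + (1 / e) * τ * s ^ 2 * qs := by
        rw [hK'def, hcSdef]; ring
      have hrest : 0 ≤ (1 / e) * τ * s ^ 2 * qs := by positivity
      rw [expand, hKform, hK'form]
      linarith [c1, c2, c3, c4, c5]
  -- summing up
  have hfibQb : ∑ i, Qb i = ∑ j ∈ Finset.univ.filter (fun j => P j), (l j) ^ 2 := by
    rw [← Finset.sum_fiberwise_of_maps_to (g := π) (t := (Finset.univ : Finset (Fin N)))
      (fun x _ => Finset.mem_univ _) (fun j => (l j) ^ 2)]
    apply Finset.sum_congr rfl
    intro i _
    rw [hQbdef]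
    simp only []
    congr 1
    ext j
    simp only [hfbdef, Finset.mem_filter, Finset.mem_univ, true_and]
    tauto
  have hfibQs : ∑ i, Qs i = ∑ j ∈ Finset.univ.filter (fun j => ¬ P j), (l j) ^ 2 := by
    rw [← Finset.sum_fiberwise_of_maps_to (g := π) (t := (Finset.univ : Finset (Fin N)))
      (fun x _ => Finset.mem_univ _) (fun j => (l j) ^ 2)]
    apply Finset.sum_congr rfl
    intro i _
    rw [hQsdef]
    simp only []
    congr 1
    ext j
    simp only [hfsdef, Finset.mem_filter, Finset.mem_univ, true_and]
    tauto
  have hQsum : ∑ i, Qb i + ∑ i, Qs i = S := by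
    rw [hfibQb, hfibQs, Finset.sum_filter_add_sum_filter_not]
  have hQbS : ∑ i, Qb i ≤ S := by
    have := Finset.sum_nonneg (fun i (_ : i ∈ Finset.univ) => hQs0 i)
    linarith
  have hQbnn : 0 ≤ ∑ i, Qb i := Finset.sum_nonneg fun i _ => hQb0 i
  have hQsnn : 0 ≤ ∑ i, Qs i := Finset.sum_nonneg fun i _ => hQs0 i
  have main : ∀ C : ℝ, K ≤ C → K' ≤ C →
      ∑ i : Fin N, (∑ j ∈ Finset.univ.filter fun j => π j = i, |l j|) ^ 4 ≤ C * s ^ 4 := by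
    intro C hKC hK'C
    calc ∑ i : Fin N, (∑ j ∈ Finset.univ.filter fun j => π j = i, |l j|) ^ 4
        = ∑ i, (B i + T i) ^ 4 := by
          apply Finset.sum_congr rfl
          intro i _
          rw [hsplit i]
      _ ≤ ∑ i, (K * s ^ 2 * Qb i + K' * s ^ 2 * Qs i) :=
          Finset.sum_le_sum fun i _ => key i
      _ = K * s ^ 2 * (∑ i, Qb i) + K' * s ^ 2 * (∑ i, Qs i) := by
          rw [Finset.sum_add_distrib, ← Finset.mul_sum, ← Finset.mul_sum]
      _ ≤ C * s ^ 2 * (∑ i, Qb i) + C * s ^ 2 * (∑ i, Qs i) := by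
          apply add_le_add
          · apply mul_le_mul_of_nonneg_right _ hQbnn
            apply mul_le_mul_of_nonneg_right hKC (sq_nonneg _)
          · apply mul_le_mul_of_nonneg_right _ hQsnn
            apply mul_le_mul_of_nonneg_right hK'C (sq_nonneg _)
      _ = C * s ^ 2 * S := by rw [← hQsum]; ring
      _ = C * s ^ 4 := by rw [← hs2]; ring
  -- the coefficient bounds
  have hτe : 0 < τ / e := by positivity
  have hKa : K ≤ τ ^ 2 + 4 * τ / e := by
    rw [hKdef]
    have hcB4 : cB ≤ 4 / e := by
      rw [hcBdef, div_le_div_iff₀ (by positivity) he0]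
      nlinarith [pow_nonneg hx0 3, sq_nonneg (e - 1), mul_nonneg hx0 hx0, he0.le,
        mul_nonneg (mul_nonneg hx0 hx0) hx0]
    have : cB * τ ≤ (4 / e) * τ := mul_le_mul_of_nonneg_right hcB4 hτ0.le
    calc τ ^ 2 + cB * τ ≤ τ ^ 2 + (4 / e) * τ := by linarith
      _ = τ ^ 2 + 4 * τ / e := by ring
  have hK'a : K' ≤ τ ^ 2 + 4 * τ / e := by
    rw [hK'def]
    have hcS4 : cS ≤ 4 / e := by
      rw [hcSdef]
      have h1 : (4 * (e - 1) ^ 2 + (e - 1) ^ 3) / e ^ 4 ≤ 3 / e := by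
        rw [div_le_div_iff₀ (by positivity) he0]
        nlinarith [pow_nonneg hx0 3, pow_nonneg hx0 4, sq_nonneg (e - 1), he0.le,
          mul_nonneg (mul_nonneg hx0 hx0) hx0, mul_nonneg (mul_nonneg (mul_nonneg hx0 hx0) hx0) hx0]
      have h2 : (3 : ℝ) / e + 1 / e = 4 / e := by ring
      linarith
    have : cS * τ ≤ (4 / e) * τ := mul_le_mul_of_nonneg_right hcS4 hτ0.le
    have h4 : (4 / e) * τ = 4 * τ / e := by ring
    nlinarith [sq_nonneg τ]
  have hKb : K ≤ 2 * τ := by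
    rw [hKdef]
    have hτ2 : τ ^ 2 ≤ τ := by nlinarith
    have hcB1 : cB ≤ 1 := by
      rw [hcBdef, div_le_one (by positivity)]
      nlinarith [pow_nonneg hx0 3, pow_nonneg hx0 4, sq_nonneg (e - 1)]
    have : cB * τ ≤ 1 * τ := mul_le_mul_of_nonneg_right hcB1 hτ0.le
    linarith
  have hK'b : K' ≤ 2 * τ := by
    rw [hK'def]
    have hcS2 : cS ≤ 2 := by
      rw [hcSdef, div_add_div _ _ (by positivity) (ne_of_gt he0), div_le_iff₀ (by positivity)]
      nlinarith [pow_nonneg hx0 3, pow_nonneg hx0 4, sq_nonneg (e - 1), he0.le,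
        mul_nonneg (mul_nonneg hx0 hx0) hx0,
        mul_nonneg (mul_nonneg (mul_nonneg hx0 hx0) hx0) hx0,
        mul_nonneg (mul_nonneg (mul_nonneg (mul_nonneg hx0 hx0) hx0) hx0) hx0]
    have : cS * τ ≤ 2 * τ := mul_le_mul_of_nonneg_right hcS2 hτ0.le
    linarith
  constructor
  · exact main _ hKa hK'a
  · exact main _ hKb hK'b
end
end

section
/- Let 0 < τ < 1, let R ≥ 1 be an integer, and let w ∈ ℝ^R satisfy |w^{(1)}| ≥ |w^{(2)}| ≥ … ≥ |w^{(R)}|. Suppose the τ-critical index of w is larger than t, and let g ≤ t be an index with t − g ≥ (1/τ²)·(3·ln(1/τ) + ln R). Then Σ_{j>t} |w^{(j)}| ≤ √τ · |w^{(g)}|. -/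
noncomputable section

/-- suppose the coordinates of `w ∈ ℝ^R` are sorted in decreasing order of
absolute value and the `τ`-critical index of `w` is larger than `t` (the first `t` positions
violate the regularity condition).  If `g ≤ t` (a valid 1-indexed position) satisfies
`t − g ≥ (1/τ²)(3 ln(1/τ) + ln R)`, then the ℓ₁ mass of the coordinates beyond position `t`
is at most `√τ · |w^{(g)}|`.  (Position `m` of the paper, 1-indexed, is index `m - 1` here.) -/
theorem stmt_16 (R : ℕ) (τ : ℝ) (hτ0 : 0 < τ) (hτ1 : τ < 1)
    (w : Fin R → ℝ)
    (hsort : ∀ i j : Fin R, i ≤ j → |w j| ≤ |w i|)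
    (t g : ℕ) (hg1 : 1 ≤ g) (hgt : g ≤ t) (hgR : g ≤ R)
    (hcrit : ∀ p : Fin R, (p : ℕ) < t →
      τ * Real.sqrt (∑ q ∈ Finset.univ.filter (fun q : Fin R => p ≤ q), (w q) ^ 2) < |w p|)
    (hgap : (1 / τ ^ 2) * (3 * Real.log (1 / τ) + Real.log R) ≤ (t : ℝ) - (g : ℝ)) :
    ∑ j ∈ Finset.univ.filter (fun j : Fin R => t < (j : ℕ) + 1), |w j|
      ≤ Real.sqrt τ * |w ⟨g - 1, by omega⟩| := by
  have hR : 0 < R := lt_of_lt_of_le Nat.one_pos (hg1.trans hgR)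
  set S : ℕ → ℝ := fun p => ∑ q ∈ Finset.univ.filter (fun q : Fin R => p ≤ (q : ℕ)), (w q) ^ 2
    with hSdef
  have hSnn : ∀ p, 0 ≤ S p := fun p => Finset.sum_nonneg fun q _ => sq_nonneg _
  have hτsq : 0 ≤ 1 - τ ^ 2 := by nlinarith
  -- relate hcrit to S
  have hcrit' : ∀ (p : ℕ) (hp : p < R), p < t → τ * Real.sqrt (S p) < |w ⟨p, hp⟩| := by
    intro p hp hpt
    have h := hcrit ⟨p, hp⟩ hpt
    have hfe : (Finset.univ.filter (fun q : Fin R => (⟨p, hp⟩ : Fin R) ≤ q))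
        = Finset.univ.filter (fun q : Fin R => p ≤ (q : ℕ)) := by
      apply Finset.filter_congr
      intro q _
      simp [Fin.le_def]
    rwa [hfe] at h
  -- squared version
  have hcrit2 : ∀ (p : ℕ) (hp : p < R), p < t → τ ^ 2 * S p < (w ⟨p, hp⟩) ^ 2 := by
    intro p hp hpt
    have h := hcrit' p hp hpt
    have hs := Real.sq_sqrt (hSnn p)
    have h0 : 0 ≤ τ * Real.sqrt (S p) := by positivity
    nlinarith [sq_abs (w ⟨p, hp⟩), Real.sqrt_nonneg (S p)]
  -- recurrence
  have hrec : ∀ p, p < t → S (p + 1) ≤ (1 - τ ^ 2) * S p := by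
    intro p hpt
    by_cases hpR : p < R
    · have hset : Finset.univ.filter (fun q : Fin R => p ≤ (q : ℕ))
          = insert ⟨p, hpR⟩ (Finset.univ.filter (fun q : Fin R => p + 1 ≤ (q : ℕ))) := by
        ext q
        simp only [Finset.mem_filter, Finset.mem_univ, true_and, Finset.mem_insert,
          Fin.ext_iff]
        omega
      have hnm : (⟨p, hpR⟩ : Fin R) ∉ Finset.univ.filter (fun q : Fin R => p + 1 ≤ (q : ℕ)) := by
        simp
      have hsplit : S p = (w ⟨p, hpR⟩) ^ 2 + S (p + 1) := by
        simp only [hSdef]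
        rw [hset, Finset.sum_insert hnm]
      have h2 := hcrit2 p hpR hpt
      nlinarith [hSnn p]
    · have h1 : S p = 0 := by
        apply Finset.sum_eq_zero
        intro q hq
        simp only [Finset.mem_filter, Finset.mem_univ, true_and] at hq
        exact absurd (lt_of_le_of_lt hq q.isLt) (by omega)
      have h2 : S (p + 1) = 0 := by
        apply Finset.sum_eq_zero
        intro q hq
        simp only [Finset.mem_filter, Finset.mem_univ, true_and] at hq
        exact absurd (lt_of_le_of_lt hq q.isLt) (by omega)
      rw [h1, h2, mul_zero]
  -- iteration
  have hiter : ∀ k, g - 1 + k ≤ t → S (g - 1 + k) ≤ (1 - τ ^ 2) ^ k * S (g - 1) := by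
    intro k
    induction k with
    | zero => intro _; simp
    | succ n ih =>
      intro hle
      have h1 := ih (by omega)
      have h2 := hrec (g - 1 + n) (by omega)
      calc S (g - 1 + (n + 1)) = S ((g - 1 + n) + 1) := by ring_nf
        _ ≤ (1 - τ ^ 2) * S (g - 1 + n) := h2
        _ ≤ (1 - τ ^ 2) * ((1 - τ ^ 2) ^ n * S (g - 1)) := by
            apply mul_le_mul_of_nonneg_left h1 hτsq
        _ = (1 - τ ^ 2) ^ (n + 1) * S (g - 1) := by ring
  -- g < t strictly
  have hlog1 : 0 < Real.log (1 / τ) := Real.log_pos (by rw [lt_div_iff₀ hτ0]; linarith)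
  have hlogR : 0 ≤ Real.log R := Real.log_natCast_nonneg R
  have hgap' : 0 < (t : ℝ) - (g : ℝ) := by
    refine lt_of_lt_of_le ?_ hgap
    have : 0 < 1 / τ ^ 2 := by positivity
    positivity
  have hglt : g < t := by exact_mod_cast (by exact_mod_cast sub_pos.mp hgap' : (g : ℝ) < t)
  set k := t - (g - 1) with hk
  have hkt : g - 1 + k = t := by omega
  have hSt : S t ≤ (1 - τ ^ 2) ^ k * S (g - 1) := hkt ▸ hiter k (by omega)
  -- bound S (g-1) by |w (g-1)|² / τ²
  have hg1R : g - 1 < R := by omega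
  have hwg := hcrit2 (g - 1) hg1R (by omega)
  have hwpos : 0 < |w ⟨g - 1, hg1R⟩| := by
    have h := hcrit' (g - 1) hg1R (by omega)
    have : 0 ≤ τ * Real.sqrt (S (g - 1)) := by positivity
    linarith
  -- key numeric bound : R * (1-τ²)^k ≤ τ³
  have hkey : (R : ℝ) * (1 - τ ^ 2) ^ k ≤ τ ^ 3 := by
    have hexp1 : (1 - τ ^ 2 : ℝ) ≤ Real.exp (-τ ^ 2) := by
      linarith [Real.add_one_le_exp (-τ ^ 2)]
    have hpow : (1 - τ ^ 2) ^ k ≤ Real.exp (-τ ^ 2) ^ k := pow_le_pow_left₀ hτsq hexp1 k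
    have hek : Real.exp (-τ ^ 2) ^ k = Real.exp ((k : ℝ) * (-τ ^ 2)) := by
      rw [← Real.exp_nat_mul]
    have hkk : (t : ℝ) - (g : ℝ) + 1 = (k : ℝ) := by
      have : k = t - g + 1 := by omega
      rw [this]; push_cast [Nat.cast_sub hgt]; ring
    have hτ2 : (0:ℝ) < τ ^ 2 := by positivity
    have hinv : τ ^ 2 * (1 / τ ^ 2) = 1 := by field_simp
    have hA : 3 * Real.log (1 / τ) + Real.log R ≤ ((t : ℝ) - (g : ℝ)) * τ ^ 2 := by
      nlinarith [hgap]
    have hB : ((t : ℝ) - (g : ℝ)) * τ ^ 2 ≤ (k : ℝ) * τ ^ 2 := by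
      apply mul_le_mul_of_nonneg_right _ hτ2.le
      linarith [hkk]
    have hexp2 : Real.exp ((k : ℝ) * (-τ ^ 2))
        ≤ Real.exp (-(3 * Real.log (1 / τ) + Real.log R)) := by
      apply Real.exp_le_exp.mpr
      nlinarith
    have h3 : -(3 * Real.log (1 / τ) + Real.log (R : ℝ)) = Real.log (τ ^ 3 / R) := by
      have h1 : Real.log (τ ^ 3 / (R : ℝ)) = Real.log (τ ^ 3) - Real.log (R : ℝ) :=
        Real.log_div (by positivity) (by positivity)
      rw [h1, Real.log_pow, one_div, Real.log_inv]
      push_cast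
      ring
    have hval : Real.exp (-(3 * Real.log (1 / τ) + Real.log (R : ℝ))) = τ ^ 3 / R := by
      rw [h3, Real.exp_log (by positivity)]
    have hfinal : (1 - τ ^ 2) ^ k ≤ τ ^ 3 / R := by
      calc (1 - τ ^ 2) ^ k ≤ Real.exp (-τ ^ 2) ^ k := hpow
        _ = Real.exp ((k : ℝ) * (-τ ^ 2)) := hek
        _ ≤ Real.exp (-(3 * Real.log (1 / τ) + Real.log R)) := hexp2
        _ = τ ^ 3 / R := hval
    have := mul_le_mul_of_nonneg_left hfinal (by positivity : (0:ℝ) ≤ (R : ℝ))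
    have hRne : (R : ℝ) ≠ 0 := by positivity
    calc (R : ℝ) * (1 - τ ^ 2) ^ k ≤ (R : ℝ) * (τ ^ 3 / R) := this
      _ = τ ^ 3 := by field_simp
  -- assemble
  set L := ∑ j ∈ Finset.univ.filter (fun j : Fin R => t < (j : ℕ) + 1), |w j| with hL
  have hFeq : Finset.univ.filter (fun j : Fin R => t < (j : ℕ) + 1)
      = Finset.univ.filter (fun j : Fin R => t ≤ (j : ℕ)) := by
    apply Finset.filter_congr
    intro q _
    constructor <;> (intro h; omega)
  have hL0 : 0 ≤ L := Finset.sum_nonneg fun j _ => abs_nonneg _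
  have hcard : ((Finset.univ.filter (fun j : Fin R => t < (j : ℕ) + 1)).card : ℝ) ≤ R := by
    have h := Finset.card_le_univ (Finset.univ.filter (fun j : Fin R => t < (j : ℕ) + 1))
    simp only [Fintype.card_fin] at h
    exact_mod_cast h
  have hCS : L ^ 2 ≤ (R : ℝ) * S t := by
    have h1 := sq_sum_le_card_mul_sum_sq
      (s := Finset.univ.filter (fun j : Fin R => t < (j : ℕ) + 1)) (f := fun j => |w j|)
    have h2 : ∑ j ∈ Finset.univ.filter (fun j : Fin R => t < (j : ℕ) + 1), |w j| ^ 2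
        = S t := by
      rw [hFeq, hSdef]
      exact Finset.sum_congr rfl fun j _ => sq_abs _
    rw [h2] at h1
    calc L ^ 2 ≤ ((Finset.univ.filter (fun j : Fin R => t < (j : ℕ) + 1)).card : ℝ) * S t :=
          h1
      _ ≤ (R : ℝ) * S t := mul_le_mul_of_nonneg_right hcard (hSnn t)
  have hsq : L ^ 2 ≤ τ * (w ⟨g - 1, hg1R⟩) ^ 2 := by
    have c1 : (R : ℝ) * S t ≤ (R : ℝ) * ((1 - τ ^ 2) ^ k * S (g - 1)) :=
      mul_le_mul_of_nonneg_left hSt (by positivity)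
    have c2 : (R : ℝ) * ((1 - τ ^ 2) ^ k * S (g - 1)) ≤ τ ^ 3 * S (g - 1) := by
      have := mul_le_mul_of_nonneg_right hkey (hSnn (g - 1))
      linarith [this, mul_assoc (R : ℝ) ((1 - τ ^ 2) ^ k) (S (g - 1))]
    have c3 : τ ^ 3 * S (g - 1) ≤ τ * (w ⟨g - 1, hg1R⟩) ^ 2 := by
      have hm := mul_le_mul_of_nonneg_left hwg.le hτ0.le
      calc τ ^ 3 * S (g - 1) = τ * (τ ^ 2 * S (g - 1)) := by ring
        _ ≤ τ * (w ⟨g - 1, hg1R⟩) ^ 2 := hm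
    linarith [hCS]
  have hRHS0 : 0 ≤ Real.sqrt τ * |w ⟨g - 1, hg1R⟩| :=
    mul_nonneg (Real.sqrt_nonneg _) (abs_nonneg _)
  have hRHSsq : (Real.sqrt τ * |w ⟨g - 1, hg1R⟩|) ^ 2 = τ * (w ⟨g - 1, hg1R⟩) ^ 2 := by
    rw [mul_pow, Real.sq_sqrt hτ0.le, sq_abs]
  calc L = Real.sqrt (L ^ 2) := (Real.sqrt_sq hL0).symm
    _ ≤ Real.sqrt ((Real.sqrt τ * |w ⟨g - 1, hg1R⟩|) ^ 2) := by
        apply Real.sqrt_le_sqrt; rw [hRHSsq]; exact hsq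
    _ = Real.sqrt τ * |w ⟨g - 1, hg1R⟩| := Real.sqrt_sq hRHS0
end
end
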